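/- arXiv:1808.01152 — 3 statements merged into one kernel-verified Lean document; each statement's English description precedes it below -/
import Mathlib

section
/- There is an absolute constant K such that for all d ≥ 1, log₂ C_4(Q_d) ≤ N + K·N/d, where N = 2^d and C_4(Q_d) is the number of proper 4-colorings of Q_d. The same bound holds for log₂|Γ| for any nonempty set Γ of proper 4-colorings of Q_d. -/
open Finset

abbrev V (d : ℕ) : Type := Fin d → Bool

def cube (d : ℕ) : SimpleGraph (V d) where
  Adj u v := (Finset.univ.filter fun i => u i ≠ v i).card = 1
  symm := by
    constructor
    intro u v h
    have e : (Finset.univ.filter fun i => v i ≠ u i) = (Finset.univ.filter fun i => u i ≠ v i) := by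
      apply Finset.filter_congr
      intro i _
      exact ne_comm
    rw [e]
    exact h
  loopless := by
    constructor
    intro u h
    simp at h

instance cubeAdjDecidable (d : ℕ) : DecidableRel (cube d).Adj := fun u v =>
  decidable_of_iff ((Finset.univ.filter fun i => u i ≠ v i).card = 1) Iff.rfl

/-- a vertex of the hypercube is even if it has an even number of `true` coordinates. -/
def isEven {d : ℕ} (v : V d) : Prop := Even (Finset.univ.filter fun i => v i = true).card

/-- `f` is a proper `q`-coloring of the `d`-dimensional hypercube. -/
def IsColoring (d q : ℕ) (f : V d → Fin q) : Prop :=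
  ∀ u v : V d, (cube d).Adj u v → f u ≠ f v


/-- n-fold Hölder via weighted AM-GM. -/
lemma holder_prod {C : Type*} [Fintype C] {κ : Type*} (J : Finset κ) {d : ℕ} (hd : 0 < d)
    (hJ : J.card = d) (u : κ → C → ℝ) (hu : ∀ j x, 0 ≤ u j x) :
    ∑ x : C, ∏ j ∈ J, (u j x) ^ (1/(d:ℝ)) ≤ ∏ j ∈ J, (∑ x : C, u j x) ^ (1/(d:ℝ)) := by
  have hdR : (0:ℝ) < d := by exact_mod_cast hd
  by_cases h0 : ∃ j ∈ J, ∑ x : C, u j x = 0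
  · obtain ⟨j0, hj0, hW⟩ := h0
    have hu0 : ∀ x : C, u j0 x = 0 := fun x =>
      (Finset.sum_eq_zero_iff_of_nonneg (fun x _ => hu j0 x)).1 hW x (mem_univ x)
    have hL : ∑ x : C, ∏ j ∈ J, (u j x) ^ (1/(d:ℝ)) = 0 := by
      apply Finset.sum_eq_zero
      intro x _
      apply Finset.prod_eq_zero hj0
      rw [hu0 x]
      exact Real.zero_rpow (by positivity)
    rw [hL]
    exact Finset.prod_nonneg fun j _ =>
      Real.rpow_nonneg (Finset.sum_nonneg fun x _ => hu j x) _
  · push_neg at h0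
    set W : κ → ℝ := fun j => ∑ x : C, u j x with hWdef
    have hWpos : ∀ j ∈ J, 0 < W j := fun j hj =>
      (Finset.sum_nonneg fun x _ => hu j x).lt_of_ne (Ne.symm (h0 j hj))
    have e1 : ∀ x : C, ∏ j ∈ J, (u j x) ^ (1/(d:ℝ)) =
        (∏ j ∈ J, (W j) ^ (1/(d:ℝ))) * ∏ j ∈ J, (u j x / W j) ^ (1/(d:ℝ)) := by
      intro x
      rw [← Finset.prod_mul_distrib]
      apply Finset.prod_congr rfl
      intro j hj
      rw [← Real.mul_rpow (hWpos j hj).le (div_nonneg (hu j x) (hWpos j hj).le)]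
      rw [mul_div_cancel₀ _ (hWpos j hj).ne']
    have hsum1 : ∑ x : C, ∏ j ∈ J, (u j x / W j) ^ (1/(d:ℝ)) ≤ 1 := by
      have amgm : ∀ x : C, ∏ j ∈ J, (u j x / W j) ^ (1/(d:ℝ)) ≤
          ∑ j ∈ J, (1/(d:ℝ)) * (u j x / W j) := by
        intro x
        apply Real.geom_mean_le_arith_mean_weighted J (fun _ => 1/(d:ℝ))
          (fun j => u j x / W j) (fun j _ => by positivity)
        · rw [Finset.sum_const, hJ, nsmul_eq_mul]
          field_simp
        · exact fun j hj => div_nonneg (hu j x) (hWpos j hj).le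
      calc ∑ x : C, ∏ j ∈ J, (u j x / W j) ^ (1/(d:ℝ))
          ≤ ∑ x : C, ∑ j ∈ J, (1/(d:ℝ)) * (u j x / W j) :=
            Finset.sum_le_sum fun x _ => amgm x
        _ = ∑ j ∈ J, (1/(d:ℝ)) * (W j / W j) := by
            rw [Finset.sum_comm]
            apply Finset.sum_congr rfl
            intro j hj
            rw [← Finset.mul_sum, ← Finset.sum_div]
        _ = ∑ j ∈ J, (1/(d:ℝ)) := by
            apply Finset.sum_congr rfl
            intro j hj
            rw [div_self (hWpos j hj).ne', mul_one]
        _ = 1 := by rw [Finset.sum_const, hJ, nsmul_eq_mul]; field_simp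
    calc ∑ x : C, ∏ j ∈ J, (u j x) ^ (1/(d:ℝ))
        = (∏ j ∈ J, (W j) ^ (1/(d:ℝ))) * ∑ x : C, ∏ j ∈ J, (u j x / W j) ^ (1/(d:ℝ)) := by
          rw [Finset.mul_sum]; exact Finset.sum_congr rfl fun x _ => e1 x
      _ ≤ (∏ j ∈ J, (W j) ^ (1/(d:ℝ))) * 1 := by
          apply mul_le_mul_of_nonneg_left hsum1
          exact Finset.prod_nonneg fun j hj => Real.rpow_nonneg (hWpos j hj).le _
      _ = _ := mul_one _

lemma update_sum {ι : Type*} [Fintype ι] [DecidableEq ι] {C : Type*} [Fintype C]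
    (e0 : ι) (F : (ι → C) → ℝ) :
    ∑ x : C, ∑ g : ι → C, F (Function.update g e0 x) =
      (Fintype.card C : ℝ) * ∑ g : ι → C, F g := by
  have hinv : Function.Involutive
      (fun p : (ι → C) × C => (Function.update p.1 e0 p.2, p.1 e0)) := by
    rintro ⟨g, x⟩
    simp [Function.update_idem]
  calc ∑ x : C, ∑ g : ι → C, F (Function.update g e0 x)
      = ∑ g : ι → C, ∑ x : C, F (Function.update g e0 x) := Finset.sum_comm
    _ = ∑ p : (ι → C) × C, F (Function.update p.1 e0 p.2) :=
        (Fintype.sum_prod_type (f := fun p : (ι → C) × C => F (Function.update p.1 e0 p.2))).symm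
    _ = ∑ p : (ι → C) × C, (fun q : (ι → C) × C => F q.1)
          ((fun p : (ι → C) × C => (Function.update p.1 e0 p.2, p.1 e0)) p) := rfl
    _ = ∑ q : (ι → C) × C, F q.1 := Fintype.sum_bijective _ hinv.bijective _ _ (fun _ => rfl)
    _ = ∑ g : ι → C, ∑ _x : C, F g :=
        Fintype.sum_prod_type (f := fun q : (ι → C) × C => F q.1)
    _ = (Fintype.card C : ℝ) * ∑ g : ι → C, F g := by
        simp [Finset.sum_const, card_univ, Finset.mul_sum, mul_comm]
lemma finner_aux {ι C κ : Type*} [Fintype ι] [DecidableEq ι] [Fintype C] [Nonempty C]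
    [Fintype κ] [DecidableEq κ] {d : ℕ} (hd : 0 < d) :
    ∀ (n : ℕ) (A : Finset ι), A.card = n → ∀ (S : κ → Finset ι) (f : κ → (ι → C) → ℝ),
    (∀ j g, 0 ≤ f j g) →
    (∀ j g g', (∀ e ∈ S j, g e = g' e) → f j g = f j g') →
    (∀ j, S j ⊆ A) →
    (∀ e ∈ A, (univ.filter fun j => e ∈ S j).card = d) →
    ∑ g : ι → C, ∏ j, f j g ≤
      (Fintype.card C : ℝ) ^ ((Fintype.card ι : ℝ) - Fintype.card κ * Fintype.card ι / d) *
        ∏ j, (∑ g : ι → C, f j g ^ d) ^ (1/(d:ℝ)) := by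
  have hdR : (0:ℝ) < d := by exact_mod_cast hd
  have hcpos : (0:ℝ) < Fintype.card C := by exact_mod_cast Fintype.card_pos
  set cR : ℝ := (Fintype.card C : ℝ) with hcRdef
  set M : ℝ := cR ^ ((Fintype.card ι : ℝ) - Fintype.card κ * Fintype.card ι / d) with hMdef
  have hMpos : 0 < M := Real.rpow_pos_of_pos hcpos _
  intro n
  induction n with
  | zero =>
    intro A hA S f hf0 hjunta hsub hcov
    have hAe : A = ∅ := Finset.card_eq_zero.1 hA
    subst hAe
    have hSe : ∀ j, S j = ∅ := fun j => Finset.subset_empty.1 (hsub j)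
    set g0 : ι → C := fun _ => Classical.arbitrary C with hg0
    have hconst : ∀ j g, f j g = f j g0 := by
      intro j g
      apply hjunta
      intro e he
      rw [hSe j] at he
      exact absurd he (Finset.notMem_empty e)
    have hb0 : ∀ j, 0 ≤ f j g0 := fun j => hf0 j g0
    have hcard : ((Fintype.card (ι → C) : ℕ) : ℝ) = cR ^ (Fintype.card ι : ℕ) := by
      rw [Fintype.card_fun]; push_cast; ring
    have hLHS : ∑ g : ι → C, ∏ j, f j g = cR ^ (Fintype.card ι : ℕ) * ∏ j, f j g0 := by
      calc ∑ g : ι → C, ∏ j, f j g = ∑ _g : ι → C, ∏ j, f j g0 :=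
            Finset.sum_congr rfl fun g _ => Finset.prod_congr rfl fun j _ => hconst j g
        _ = ((Fintype.card (ι → C) : ℕ) : ℝ) * ∏ j, f j g0 := by
            rw [Finset.sum_const, card_univ, nsmul_eq_mul]
        _ = _ := by rw [hcard]
    have hmom : ∀ j, ∑ g : ι → C, f j g ^ d = cR ^ (Fintype.card ι : ℕ) * f j g0 ^ d := by
      intro j
      calc ∑ g : ι → C, f j g ^ d = ∑ _g : ι → C, f j g0 ^ d :=
            Finset.sum_congr rfl fun g _ => by rw [hconst j g]
        _ = ((Fintype.card (ι → C) : ℕ) : ℝ) * f j g0 ^ d := by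
            rw [Finset.sum_const, card_univ, nsmul_eq_mul]
        _ = _ := by rw [hcard]
    have hfac : ∀ j, (cR ^ (Fintype.card ι : ℕ) * f j g0 ^ d) ^ (1/(d:ℝ)) =
        (cR ^ (Fintype.card ι : ℕ)) ^ (1/(d:ℝ)) * f j g0 := by
      intro j
      rw [Real.mul_rpow (by positivity) (pow_nonneg (hb0 j) d)]
      congr 1
      rw [← Real.rpow_natCast (f j g0) d, ← Real.rpow_mul (hb0 j)]
      rw [mul_one_div, div_self hdR.ne', Real.rpow_one]
    have hpow : M * ((cR ^ (Fintype.card ι : ℕ)) ^ (1/(d:ℝ))) ^ (Fintype.card κ : ℕ) =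
        cR ^ (Fintype.card ι : ℕ) := by
      rw [← Real.rpow_natCast cR (Fintype.card ι), ← Real.rpow_mul hcpos.le]
      rw [← Real.rpow_natCast (cR ^ ((Fintype.card ι : ℝ) * (1/(d:ℝ)))) (Fintype.card κ)]
      rw [← Real.rpow_mul hcpos.le, hMdef, ← Real.rpow_add hcpos]
      congr 1
      ring
    refine le_of_eq ?_
    rw [hLHS]
    calc cR ^ (Fintype.card ι : ℕ) * ∏ j, f j g0
        = M * ((cR ^ (Fintype.card ι : ℕ)) ^ (1/(d:ℝ))) ^ (Fintype.card κ : ℕ) *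
            ∏ j, f j g0 := by rw [hpow]
      _ = M * ∏ j, ((cR ^ (Fintype.card ι : ℕ)) ^ (1/(d:ℝ)) * f j g0) := by
          rw [Finset.prod_mul_distrib, Finset.prod_const, card_univ]; ring
      _ = M * ∏ j, (∑ g : ι → C, f j g ^ d) ^ (1/(d:ℝ)) := by
          congr 1
          exact Finset.prod_congr rfl fun j _ => by rw [hmom j]; exact (hfac j).symm
  | succ n IH =>
    intro A hA S f hf0 hjunta hsub hcov
    have hAne : A.Nonempty := Finset.card_pos.1 (by omega)
    obtain ⟨e0, he0⟩ := hAne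
    set J0 : Finset κ := univ.filter (fun j => e0 ∈ S j) with hJ0def
    have hJ0card : J0.card = d := hcov e0 he0
    set S' : κ → Finset ι := fun j => (S j).erase e0 with hS'def
    set f' : C → κ → (ι → C) → ℝ := fun x j g => f j (Function.update g e0 x) with hf'def
    have hf'0 : ∀ x j g, 0 ≤ f' x j g := fun x j g => hf0 j _
    have hf'junta : ∀ x j g g', (∀ e ∈ S' j, g e = g' e) → f' x j g = f' x j g' := by
      intro x j g g' hgg
      apply hjunta
      intro e he
      by_cases hee : e = e0
      · subst hee; simp
      · rw [Function.update_of_ne hee, Function.update_of_ne hee]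
        exact hgg e (Finset.mem_erase.2 ⟨hee, he⟩)
    have hf'eq : ∀ x j g, e0 ∉ S j → f' x j g = f j g := by
      intro x j g hj
      apply hjunta
      intro e he
      have hee : e ≠ e0 := by
        intro h; rw [h] at he; exact hj he
      rw [Function.update_of_ne hee]
    have hsub' : ∀ j, S' j ⊆ A.erase e0 := fun j => Finset.erase_subset_erase e0 (hsub j)
    have hcov' : ∀ e ∈ A.erase e0, (univ.filter fun j => e ∈ S' j).card = d := by
      intro e he
      obtain ⟨hne, heA⟩ := Finset.mem_erase.1 he
      rw [show (univ.filter fun j => e ∈ S' j) = (univ.filter fun j => e ∈ S j) from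
        Finset.filter_congr fun j _ => by simp [hS'def, Finset.mem_erase, hne]]
      exact hcov e heA
    have hcard' : (A.erase e0).card = n := by
      rw [Finset.card_erase_of_mem he0, hA]
      omega
    set u : κ → C → ℝ := fun j x => ∑ g : ι → C, (f' x j g) ^ d with hudef
    have hIH : ∀ x : C, ∑ g : ι → C, ∏ j, f' x j g ≤ M * ∏ j, (u j x) ^ (1/(d:ℝ)) := by
      intro x
      exact IH (A.erase e0) hcard' S' (f' x) (hf'0 x) (hf'junta x) hsub' hcov'
    set w : κ → ℝ := fun j => ∑ g : ι → C, f j g ^ d with hwdef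
    have hw0 : ∀ j, 0 ≤ w j := fun j => Finset.sum_nonneg fun g _ => pow_nonneg (hf0 j g) d
    have hu0 : ∀ j x, 0 ≤ u j x := fun j x =>
      Finset.sum_nonneg fun g _ => pow_nonneg (hf'0 x j g) d
    have huw : ∀ j, j ∉ J0 → ∀ x, u j x = w j := by
      intro j hj x
      have hj' : e0 ∉ S j := by
        intro h; exact hj (Finset.mem_filter.2 ⟨Finset.mem_univ j, h⟩)
      exact Finset.sum_congr rfl fun g _ => by rw [hf'eq x j g hj']
    have husum : ∀ j, ∑ x : C, u j x = cR * w j := by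
      intro j
      exact update_sum e0 (fun g => f j g ^ d)
    have hkey : cR * ∑ g : ι → C, ∏ j, f j g = ∑ x : C, ∑ g : ι → C, ∏ j, f' x j g := by
      rw [← update_sum e0 (fun g => ∏ j, f j g)]
    have hhold : ∑ x : C, ∏ j ∈ J0, (u j x) ^ (1/(d:ℝ)) ≤
        ∏ j ∈ J0, (∑ x : C, u j x) ^ (1/(d:ℝ)) :=
      holder_prod J0 hd hJ0card u hu0
    have hsplit : ∀ x : C, ∏ j, (u j x) ^ (1/(d:ℝ)) =
        (∏ j ∈ J0ᶜ, (w j) ^ (1/(d:ℝ))) * ∏ j ∈ J0, (u j x) ^ (1/(d:ℝ)) := by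
      intro x
      rw [← Finset.prod_compl_mul_prod J0]
      congr 1
      exact Finset.prod_congr rfl fun j hj => by rw [huw j (Finset.mem_compl.1 hj) x]
    have hstep : ∑ x : C, ∑ g : ι → C, ∏ j, f' x j g ≤ cR * (M * ∏ j, (w j) ^ (1/(d:ℝ))) := by
      have h1 : ∑ x : C, ∑ g : ι → C, ∏ j, f' x j g ≤
          ∑ x : C, M * ∏ j, (u j x) ^ (1/(d:ℝ)) :=
        Finset.sum_le_sum fun x _ => hIH x
      have h2 : ∑ x : C, M * ∏ j, (u j x) ^ (1/(d:ℝ)) =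
          (M * ∏ j ∈ J0ᶜ, (w j) ^ (1/(d:ℝ))) * ∑ x : C, ∏ j ∈ J0, (u j x) ^ (1/(d:ℝ)) := by
        rw [Finset.mul_sum]
        exact Finset.sum_congr rfl fun x _ => by rw [hsplit x]; ring
      have h3 : ∏ j ∈ J0, (∑ x : C, u j x) ^ (1/(d:ℝ)) = cR * ∏ j ∈ J0, (w j) ^ (1/(d:ℝ)) := by
        rw [Finset.prod_congr rfl (fun j (_ : j ∈ J0) => by
          rw [husum j, Real.mul_rpow hcpos.le (hw0 j)])]
        rw [Finset.prod_mul_distrib, Finset.prod_const, hJ0card]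
        congr 1
        rw [← Real.rpow_natCast (cR ^ (1/(d:ℝ))) d, ← Real.rpow_mul hcpos.le]
        rw [one_div, inv_mul_cancel₀ (by exact_mod_cast hd.ne' : (d:ℝ) ≠ 0), Real.rpow_one]
      have hnn : 0 ≤ M * ∏ j ∈ J0ᶜ, (w j) ^ (1/(d:ℝ)) :=
        mul_nonneg hMpos.le (Finset.prod_nonneg fun j _ => Real.rpow_nonneg (hw0 j) _)
      calc ∑ x : C, ∑ g : ι → C, ∏ j, f' x j g
          ≤ (M * ∏ j ∈ J0ᶜ, (w j) ^ (1/(d:ℝ))) * ∑ x : C, ∏ j ∈ J0, (u j x) ^ (1/(d:ℝ)) := by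
            rw [← h2]; exact h1
        _ ≤ (M * ∏ j ∈ J0ᶜ, (w j) ^ (1/(d:ℝ))) * (cR * ∏ j ∈ J0, (w j) ^ (1/(d:ℝ))) :=
            mul_le_mul_of_nonneg_left (h3 ▸ hhold) hnn
        _ = cR * (M * ∏ j, (w j) ^ (1/(d:ℝ))) := by
            rw [← Finset.prod_compl_mul_prod J0 (fun j => (w j) ^ (1/(d:ℝ)))]
            ring
    exact (mul_le_mul_iff_right₀ hcpos).1 (le_of_eq_of_le hkey hstep)

lemma finner {ι C κ : Type*} [Fintype ι] [DecidableEq ι] [Fintype C] [Nonempty C]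
    [Fintype κ] [DecidableEq κ] {d : ℕ} (hd : 0 < d) (A : Finset ι) (S : κ → Finset ι)
    (f : κ → (ι → C) → ℝ)
    (hf0 : ∀ j g, 0 ≤ f j g)
    (hjunta : ∀ j g g', (∀ e ∈ S j, g e = g' e) → f j g = f j g')
    (hsub : ∀ j, S j ⊆ A)
    (hcov : ∀ e ∈ A, (univ.filter fun j => e ∈ S j).card = d) :
    ∑ g : ι → C, ∏ j, f j g ≤
      (Fintype.card C : ℝ) ^ ((Fintype.card ι : ℝ) - Fintype.card κ * Fintype.card ι / d) *
        ∏ j, (∑ g : ι → C, f j g ^ d) ^ (1/(d:ℝ)) :=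
  finner_aux hd A.card A rfl S f hf0 hjunta hsub hcov

instance isEvenDec (d : ℕ) : DecidablePred (@isEven d) := fun v =>
  decidable_of_iff _ (Iff.rfl : Even _ ↔ isEven v)

instance isColoringDec (d q : ℕ) : DecidablePred (IsColoring d q) := fun f => by
  unfold IsColoring; infer_instance

/-- cflip coordinate `i`. -/
def cflip {d : ℕ} (u : V d) (i : Fin d) : V d := Function.update u i (!u i)

lemma flip_apply_self {d : ℕ} (u : V d) (i : Fin d) : cflip u i i = !u i := by
  simp [cflip]

lemma flip_apply_ne {d : ℕ} (u : V d) {i j : Fin d} (h : j ≠ i) : cflip u i j = u j := by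
  simp [cflip, Function.update_of_ne h]

lemma cflip_flip {d : ℕ} (u : V d) (i : Fin d) : cflip (cflip u i) i = u := by
  funext j
  by_cases h : j = i
  · subst h; simp [cflip]
  · rw [flip_apply_ne _ h, flip_apply_ne _ h]

lemma adj_flip {d : ℕ} (u : V d) (i : Fin d) : (cube d).Adj u (cflip u i) := by
  show (Finset.univ.filter fun j => u j ≠ cflip u i j).card = 1
  have : (Finset.univ.filter fun j => u j ≠ cflip u i j) = {i} := by
    ext j
    simp only [Finset.mem_filter, Finset.mem_univ, true_and, Finset.mem_singleton]
    constructor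
    · intro h
      by_contra hj
      exact h (flip_apply_ne u hj).symm
    · intro h
      subst h
      rw [flip_apply_self]
      simp
  rw [this, Finset.card_singleton]

lemma adj_elim {d : ℕ} {u v : V d} (h : (cube d).Adj u v) : ∃ i, v = cflip u i := by
  have h' : (Finset.univ.filter fun i => u i ≠ v i).card = 1 := h
  obtain ⟨i, hi⟩ := Finset.card_eq_one.1 h'
  refine ⟨i, funext fun j => ?_⟩
  have hmem : ∀ j : Fin d, u j ≠ v j ↔ j = i := by
    intro j
    constructor
    · intro hj
      have : j ∈ ({i} : Finset (Fin d)) := hi ▸ (Finset.mem_filter.2 ⟨Finset.mem_univ j, hj⟩)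
      exact Finset.mem_singleton.1 this
    · intro hj
      subst hj
      have : j ∈ Finset.univ.filter fun k => u k ≠ v k := hi ▸ Finset.mem_singleton_self j
      exact (Finset.mem_filter.1 this).2
  by_cases hj : j = i
  · subst hj
    have : u j ≠ v j := (hmem j).2 rfl
    rw [flip_apply_self]
    cases hu : u j <;> cases hv : v j <;> simp_all
  · have h2 : u j = v j := not_not.1 fun hc => hj ((hmem j).1 hc)
    rw [flip_apply_ne _ hj]
    exact h2.symm

lemma flip_inj {d : ℕ} (u : V d) : Function.Injective (cflip u) := by
  intro i i' h
  by_contra hne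
  have h1 : cflip u i i = !u i := flip_apply_self u i
  have h2 : cflip u i' i = u i := flip_apply_ne u (Ne.symm (Ne.symm hne))
  rw [h] at h1
  rw [h1] at h2
  exact (Bool.not_ne_self (u i)) h2

lemma degree_eq {d : ℕ} (u : V d) : (Finset.univ.filter ((cube d).Adj u)).card = d := by
  have him : (Finset.univ.filter ((cube d).Adj u)) = Finset.univ.image (cflip u) := by
    ext v
    simp only [Finset.mem_filter, Finset.mem_univ, true_and, Finset.mem_image]
    constructor
    · intro h
      obtain ⟨i, hi⟩ := adj_elim h
      exact ⟨i, hi.symm⟩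
    · rintro ⟨i, rfl⟩
      exact adj_flip u i
  rw [him, Finset.card_image_of_injective _ (flip_inj u), Finset.card_univ, Fintype.card_fin]

lemma adj_parity {d : ℕ} {u v : V d} (h : (cube d).Adj u v) : (isEven v ↔ ¬ isEven u) := by
  obtain ⟨i, rfl⟩ := adj_elim h
  set s : Finset (Fin d) := Finset.univ.filter (fun j => u j = true) with hs
  set t : Finset (Fin d) := Finset.univ.filter (fun j => cflip u i j = true) with ht
  by_cases hui : u i = true
  · -- s = insert i t, i ∉ t
    have hit : i ∉ t := by
      simp [ht, flip_apply_self, hui]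
    have hst : s = insert i t := by
      ext j
      simp only [hs, ht, Finset.mem_filter, Finset.mem_univ, true_and, Finset.mem_insert]
      by_cases hj : j = i
      · subst hj; simp [hui]
      · rw [flip_apply_ne _ hj]; simp [hj]
    show Even t.card ↔ ¬ Even s.card
    rw [hst, Finset.card_insert_of_notMem hit, Nat.even_add_one, not_not]
  · -- t = insert i s, i ∉ s
    have his : i ∉ s := by simp [hs, hui]
    have hts : t = insert i s := by
      ext j
      simp only [hs, ht, Finset.mem_filter, Finset.mem_univ, true_and, Finset.mem_insert]
      by_cases hj : j = i
      · subst hj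
        have hfalse : u j = false := by simpa using hui
        simp [flip_apply_self, hfalse]
      · rw [flip_apply_ne _ hj]; simp [hj]
    show Even t.card ↔ ¬ Even s.card
    rw [hts, Finset.card_insert_of_notMem his, Nat.even_add_one]

lemma card_V (d : ℕ) : Fintype.card (V d) = 2 ^ d := by
  rw [Fintype.card_fun, Fintype.card_bool, Fintype.card_fin]

lemma card_odd_even (d : ℕ) (hd : 1 ≤ d) :
    2 * (Finset.univ.filter (fun v : V d => ¬ isEven v)).card = 2 ^ d := by
  classical
  set i0 : Fin d := ⟨0, hd⟩ with hi0
  have hbij : (Finset.univ.filter (fun v : V d => isEven v)).card =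
      (Finset.univ.filter (fun v : V d => ¬ isEven v)).card := by
    apply Finset.card_bij' (fun v _ => cflip v i0) (fun v _ => cflip v i0)
    · intro v hv
      simp only [Finset.mem_filter, Finset.mem_univ, true_and] at hv ⊢
      have := adj_parity (adj_flip v i0)
      rw [this]
      exact fun hc => hc hv
    · intro v hv
      simp only [Finset.mem_filter, Finset.mem_univ, true_and] at hv ⊢
      have := adj_parity (adj_flip v i0)
      by_contra hc
      rw [this] at hc
      exact hc hv
    · intro v _; exact cflip_flip v i0
    · intro v _; exact cflip_flip v i0
  have htot : (Finset.univ.filter (fun v : V d => isEven v)).card +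
      (Finset.univ.filter (fun v : V d => ¬ isEven v)).card = 2 ^ d := by
    rw [Finset.card_filter_add_card_filter_not, Finset.card_univ, card_V]
  omega
-- ===== application to the hypercube =====

def nbr (d : ℕ) (v : V d) : Finset (V d) := univ.filter ((cube d).Adj v)

def avail {d : ℕ} (Sj : Finset (V d)) (g : V d → Fin 4) : Finset (Fin 4) :=
  univ.filter fun x => ∀ u ∈ Sj, g u ≠ x

abbrev OddV (d : ℕ) : Type := {v : V d // ¬ isEven v}

lemma avail_junta {d : ℕ} (Sj : Finset (V d)) (g g' : V d → Fin 4)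
    (h : ∀ u ∈ Sj, g u = g' u) : avail Sj g = avail Sj g' := by
  unfold avail
  apply Finset.filter_congr
  intro x _
  constructor
  · intro hx u hu
    rw [← h u hu]; exact hx u hu
  · intro hx u hu
    rw [h u hu]; exact hx u hu

lemma mem_nbr {d : ℕ} {v u : V d} : u ∈ nbr d v ↔ (cube d).Adj v u := by
  simp [nbr]

lemma nbr_even {d : ℕ} (j : OddV d) {u : V d} (hu : u ∈ nbr d j.val) : isEven u := by
  have hadj := mem_nbr.1 hu
  exact (adj_parity hadj).2 j.2

lemma subset_pair {α : Type*} [DecidableEq α] [Nonempty α] {s : Finset α} (h : s.card ≤ 2) :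
    ∃ a b, s ⊆ {a, b} := by
  rcases Nat.lt_or_ge s.card 2 with h2 | h2
  · rcases Nat.lt_or_ge s.card 1 with h1 | h1
    · have hs : s = ∅ := Finset.card_eq_zero.1 (by omega)
      exact ⟨Classical.arbitrary α, Classical.arbitrary α, by simp [hs]⟩
    · have hs : s.card = 1 := by omega
      obtain ⟨a, ha⟩ := Finset.card_eq_one.1 hs
      exact ⟨a, a, by simp [ha]⟩
  · have hs : s.card = 2 := le_antisymm h h2
    obtain ⟨a, b, _, hab⟩ := Finset.card_eq_two.1 hs
    exact ⟨a, b, hab.le⟩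

lemma claimA (d : ℕ) (Γ : Finset (V d → Fin 4)) (hΓ : ∀ f ∈ Γ, IsColoring d 4 f) :
    Γ.card * 4 ^ (Fintype.card (OddV d)) ≤
      ∑ g : V d → Fin 4, ∏ j : OddV d, (avail (nbr d j.val) g).card := by
  classical
  have hRHS : ∑ g : V d → Fin 4, ∏ j : OddV d, (avail (nbr d j.val) g).card =
      ((univ : Finset (V d → Fin 4)).sigma
        (fun g => Fintype.piFinset (fun j : OddV d => avail (nbr d j.val) g))).card := by
    rw [Finset.card_sigma]
    exact (Finset.sum_congr rfl fun g _ => (Fintype.card_piFinset _)).symm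
  have hLHS : Γ.card * 4 ^ (Fintype.card (OddV d)) =
      (Γ ×ˢ (univ : Finset (OddV d → Fin 4))).card := by
    rw [Finset.card_product, Finset.card_univ, Fintype.card_fun, Fintype.card_fin]
  rw [hLHS, hRHS]
  apply Finset.card_le_card_of_injOn
    (fun p => ⟨fun v => if h : ¬ isEven v then p.2 ⟨v, h⟩ else p.1 v, fun j => p.1 j.val⟩)
  · rintro ⟨f₀, z⟩ hp
    have hf₀ : f₀ ∈ Γ := (Finset.mem_product.1 hp).1
    simp only [Finset.mem_coe, Finset.mem_sigma, Finset.mem_univ, true_and, Fintype.mem_piFinset]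
    intro j
    simp only [avail, Finset.mem_filter, Finset.mem_univ, true_and]
    intro u hu
    have hue : isEven u := nbr_even j hu
    rw [dif_neg (not_not.2 hue)]
    exact hΓ f₀ hf₀ u j.val ((cube d).adj_symm (mem_nbr.1 hu))
  · rintro ⟨f₀, z⟩ hp ⟨f₀', z'⟩ hp' heq
    have hg := congrArg (fun s : (Σ _g : V d → Fin 4, OddV d → Fin 4) => s.1) heq
    have hy := congrArg (fun s : (Σ _g : V d → Fin 4, OddV d → Fin 4) => s.2) heq
    simp only at hg hy
    have hff : f₀ = f₀' := by
      funext v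
      by_cases hv : ¬ isEven v
      · have := congrFun hy ⟨v, hv⟩
        exact this
      · have := congrFun hg v
        simpa [hv] using this
    have hzz : z = z' := by
      funext j
      have := congrFun hg j.val
      simpa [j.2] using this
    rw [hff, hzz]

lemma prod_ite_card {d : ℕ} (S : Finset (V d)) (T : Finset (Fin 4)) :
    (Fintype.piFinset (fun u : V d => if u ∈ S then T else univ)).card =
      T.card ^ S.card * 4 ^ (Fintype.card (V d) - S.card) := by
  classical
  rw [Fintype.card_piFinset]
  rw [← Finset.prod_mul_prod_compl S]
  congr 1
  · rw [Finset.prod_congr rfl (fun u hu => by rw [if_pos hu]), Finset.prod_const]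
  · rw [Finset.prod_congr rfl (fun u hu => by rw [if_neg (Finset.mem_compl.1 hu)]),
      Finset.prod_const, Finset.card_univ, Fintype.card_fin, Finset.card_compl]

lemma moment (d : ℕ) (hd : 1 ≤ d) (j : V d) :
    ∑ g : V d → Fin 4, ((avail (nbr d j) g).card : ℝ) ^ d ≤
      21 * 4 ^ (Fintype.card (V d)) := by
  classical
  set S : Finset (V d) := nbr d j with hS
  have hSd : S.card = d := degree_eq j
  have hSne : S.Nonempty := Finset.card_pos.1 (by omega)
  set N : ℕ := Fintype.card (V d) with hNdef
  have hdN : d ≤ N := by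
    rw [hNdef, card_V]
    exact Nat.le_of_lt (Nat.lt_two_pow_self)
  -- avail card
  have havail : ∀ g : V d → Fin 4, (avail S g).card = 4 - (S.image g).card := by
    intro g
    have hgim : avail S g = (S.image g)ᶜ := by
      ext x
      simp only [avail, Finset.mem_filter, Finset.mem_univ, true_and, Finset.mem_compl,
        Finset.mem_image, not_exists]
      tauto
    rw [hgim, Finset.card_compl, Fintype.card_fin]
  set P2 : (V d → Fin 4) → Prop :=
    fun g => ∃ c1 c2 : Fin 4, ∀ u ∈ S, g u = c1 ∨ g u = c2 with hP2
  set P3 : (V d → Fin 4) → Prop := fun g => ∃ c : Fin 4, ∀ u ∈ S, g u = c with hP3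
  have hpoint : ∀ g : V d → Fin 4, ((avail S g).card : ℝ) ^ d ≤
      1 + 2 ^ d * (if P2 g then (1:ℝ) else 0) + 3 ^ d * (if P3 g then (1:ℝ) else 0) := by
    intro g
    set k : ℕ := (S.image g).card with hk
    have hk1 : 1 ≤ k := by
      rw [hk]
      exact Finset.card_pos.2 (hSne.image g)
    have hm : (avail S g).card = 4 - k := havail g
    have h2nn : (0:ℝ) ≤ 2 ^ d * (if P2 g then (1:ℝ) else 0) := by positivity
    have h3nn : (0:ℝ) ≤ 3 ^ d * (if P3 g then (1:ℝ) else 0) := by positivity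
    by_cases hk1' : k ≤ 1
    · -- image in a singleton : P3 and P2 hold, card avail ≤ 3
      obtain ⟨c, hc⟩ := Finset.card_le_one_iff_subset_singleton.1 hk1'
      have h3 : P3 g := ⟨c, fun u hu => Finset.mem_singleton.1 (hc (Finset.mem_image_of_mem g hu))⟩
      have h2 : P2 g := ⟨c, c, fun u hu => Or.inl
        (Finset.mem_singleton.1 (hc (Finset.mem_image_of_mem g hu)))⟩
      rw [if_pos h2, if_pos h3]
      have hmle : ((avail S g).card : ℝ) ≤ 3 := by
        rw [hm]
        have h' : 4 - k ≤ 3 := by omega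
        exact_mod_cast h'
      have hcalc : ((avail S g).card : ℝ) ^ d ≤ 3 ^ d :=
        pow_le_pow_left₀ (Nat.cast_nonneg _) hmle d
      have h2pos : (0:ℝ) ≤ 2 ^ d := by positivity
      linarith [hcalc, h2pos]
    · by_cases hk2 : k ≤ 2
      · -- P2 holds, avail ≤ 2
        obtain ⟨c1, c2, hc⟩ := subset_pair hk2
        have h2 : P2 g := ⟨c1, c2, fun u hu => by
          have := hc (Finset.mem_image_of_mem g hu)
          simpa using this⟩
        rw [if_pos h2]
        have hmle : ((avail S g).card : ℝ) ≤ 2 := by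
          rw [hm]
          have : 4 - k ≤ 2 := by omega
          exact_mod_cast this
        have hcalc : ((avail S g).card : ℝ) ^ d ≤ 2 ^ d :=
          pow_le_pow_left₀ (Nat.cast_nonneg _) hmle d
        linarith [hcalc, h3nn]
      · -- avail ≤ 1
        have hmle : ((avail S g).card : ℝ) ≤ 1 := by
          rw [hm]
          have : 4 - k ≤ 1 := by omega
          exact_mod_cast this
        have hcalc : ((avail S g).card : ℝ) ^ d ≤ 1 ^ d :=
          pow_le_pow_left₀ (Nat.cast_nonneg _) hmle d
        rw [one_pow] at hcalc
        linarith [hcalc, h2nn, h3nn]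
  -- counting P3
  have hcount3 : ((univ.filter P3).card : ℝ) ≤ 4 * 4 ^ (N - d) := by
    have hsub : univ.filter P3 ⊆ (univ : Finset (Fin 4)).biUnion
        (fun c => univ.filter (fun g : V d → Fin 4 => ∀ u ∈ S, g u = c)) := by
      intro g hg
      obtain ⟨c, hc⟩ := (Finset.mem_filter.1 hg).2
      exact Finset.mem_biUnion.2 ⟨c, Finset.mem_univ c,
        Finset.mem_filter.2 ⟨Finset.mem_univ g, hc⟩⟩
    have hone : ∀ c : Fin 4, (univ.filter (fun g : V d → Fin 4 => ∀ u ∈ S, g u = c)).card =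
        4 ^ (N - d) := by
      intro c
      have : univ.filter (fun g : V d → Fin 4 => ∀ u ∈ S, g u = c) =
          Fintype.piFinset (fun u : V d => if u ∈ S then ({c} : Finset (Fin 4)) else univ) := by
        ext g
        simp only [Finset.mem_filter, Finset.mem_univ, true_and, Fintype.mem_piFinset]
        constructor
        · intro h u
          by_cases hu : u ∈ S
          · rw [if_pos hu]; exact Finset.mem_singleton.2 (h u hu)
          · rw [if_neg hu]; exact Finset.mem_univ _
        · intro h u hu
          have := h u
          rw [if_pos hu] at this
          exact Finset.mem_singleton.1 this
      rw [this, prod_ite_card, Finset.card_singleton, one_pow, one_mul, hSd]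
    calc ((univ.filter P3).card : ℝ)
        ≤ (((univ : Finset (Fin 4)).biUnion
            (fun c => univ.filter (fun g : V d → Fin 4 => ∀ u ∈ S, g u = c))).card : ℝ) := by
          exact_mod_cast Finset.card_le_card hsub
      _ ≤ ∑ c : Fin 4, ((univ.filter (fun g : V d → Fin 4 => ∀ u ∈ S, g u = c)).card : ℝ) := by
          exact_mod_cast Finset.card_biUnion_le
      _ = ∑ _c : Fin 4, (((4:ℕ) ^ (N - d) : ℕ) : ℝ) :=
          Finset.sum_congr rfl fun c _ => by rw [hone c]
      _ = 4 * 4 ^ (N - d) := by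
          rw [Finset.sum_const, Finset.card_univ, Fintype.card_fin, nsmul_eq_mul]
          push_cast
          ring
  -- counting P2
  have hcount2 : ((univ.filter P2).card : ℝ) ≤ 16 * (2 ^ d * 4 ^ (N - d)) := by
    have hsub : univ.filter P2 ⊆ (univ : Finset (Fin 4 × Fin 4)).biUnion
        (fun c => univ.filter (fun g : V d → Fin 4 => ∀ u ∈ S, g u = c.1 ∨ g u = c.2)) := by
      intro g hg
      obtain ⟨c1, c2, hc⟩ := (Finset.mem_filter.1 hg).2
      exact Finset.mem_biUnion.2 ⟨(c1, c2), Finset.mem_univ _,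
        Finset.mem_filter.2 ⟨Finset.mem_univ g, hc⟩⟩
    have hone : ∀ c : Fin 4 × Fin 4,
        ((univ.filter (fun g : V d → Fin 4 => ∀ u ∈ S, g u = c.1 ∨ g u = c.2)).card : ℝ) ≤
        2 ^ d * 4 ^ (N - d) := by
      intro c
      have heq : univ.filter (fun g : V d → Fin 4 => ∀ u ∈ S, g u = c.1 ∨ g u = c.2) =
          Fintype.piFinset (fun u : V d =>
            if u ∈ S then ({c.1, c.2} : Finset (Fin 4)) else univ) := by
        ext g
        simp only [Finset.mem_filter, Finset.mem_univ, true_and, Fintype.mem_piFinset]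
        constructor
        · intro h u
          by_cases hu : u ∈ S
          · rw [if_pos hu]
            rcases h u hu with h' | h' <;> simp [h']
          · rw [if_neg hu]; exact Finset.mem_univ _
        · intro h u hu
          have := h u
          rw [if_pos hu] at this
          simpa using this
      rw [heq, prod_ite_card, hSd]
      push_cast
      have hc2 : (({c.1, c.2} : Finset (Fin 4)).card : ℝ) ≤ 2 := by
        have h' : ({c.1, c.2} : Finset (Fin 4)).card ≤ 2 :=
          (Finset.card_insert_le _ _).trans (by simp)
        exact_mod_cast h'
      have hstep : (({c.1, c.2} : Finset (Fin 4)).card : ℝ) ^ d ≤ 2 ^ d :=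
        pow_le_pow_left₀ (Nat.cast_nonneg _) hc2 d
      have h4 : (0:ℝ) ≤ 4 ^ (N - d) := by positivity
      exact mul_le_mul_of_nonneg_right hstep h4
    calc ((univ.filter P2).card : ℝ)
        ≤ (((univ : Finset (Fin 4 × Fin 4)).biUnion
            (fun c => univ.filter
              (fun g : V d → Fin 4 => ∀ u ∈ S, g u = c.1 ∨ g u = c.2))).card : ℝ) := by
          exact_mod_cast Finset.card_le_card hsub
      _ ≤ ∑ c : Fin 4 × Fin 4, ((univ.filter
            (fun g : V d → Fin 4 => ∀ u ∈ S, g u = c.1 ∨ g u = c.2)).card : ℝ) := by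
          exact_mod_cast Finset.card_biUnion_le
      _ ≤ ∑ _c : Fin 4 × Fin 4, (2:ℝ) ^ d * 4 ^ (N - d) := Finset.sum_le_sum fun c _ => hone c
      _ = 16 * (2 ^ d * 4 ^ (N - d)) := by
          rw [Finset.sum_const, Finset.card_univ, nsmul_eq_mul]
          norm_num [Fintype.card_prod, Fintype.card_fin]
  -- assemble
  have hsum : ∑ g : V d → Fin 4, ((avail S g).card : ℝ) ^ d ≤
      ∑ g : V d → Fin 4, (1 + 2 ^ d * (if P2 g then (1:ℝ) else 0) +
        3 ^ d * (if P3 g then (1:ℝ) else 0)) :=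
    Finset.sum_le_sum fun g _ => hpoint g
  have hcard_fun : ((Fintype.card (V d → Fin 4) : ℕ) : ℝ) = 4 ^ N := by
    rw [Fintype.card_fun, Fintype.card_fin]
    push_cast
    rfl
  have hsplit : ∑ g : V d → Fin 4, (1 + 2 ^ d * (if P2 g then (1:ℝ) else 0) +
      3 ^ d * (if P3 g then (1:ℝ) else 0)) =
      4 ^ N + 2 ^ d * ((univ.filter P2).card : ℝ) + 3 ^ d * ((univ.filter P3).card : ℝ) := by
    rw [Finset.sum_add_distrib, Finset.sum_add_distrib]
    congr 1
    · congr 1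
      · rw [Finset.sum_const, Finset.card_univ, nsmul_eq_mul, mul_one, hcard_fun]
      · rw [← Finset.mul_sum, Finset.sum_boole]
    · rw [← Finset.mul_sum, Finset.sum_boole]
  have hpow4 : (4:ℝ) ^ d * 4 ^ (N - d) = 4 ^ N := by
    rw [← pow_add]
    congr 1
    omega
  have h34 : (3:ℝ) ^ d ≤ 4 ^ d := pow_le_pow_left₀ (by norm_num) (by norm_num) d
  have h4Nnn : (0:ℝ) ≤ 4 ^ (N - d) := by positivity
  calc ∑ g : V d → Fin 4, ((avail S g).card : ℝ) ^ d
      ≤ 4 ^ N + 2 ^ d * ((univ.filter P2).card : ℝ) + 3 ^ d * ((univ.filter P3).card : ℝ) := by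
        rw [← hsplit]; exact hsum
    _ ≤ 4 ^ N + 2 ^ d * (16 * (2 ^ d * 4 ^ (N - d))) + 3 ^ d * (4 * 4 ^ (N - d)) := by
        have a2 := mul_le_mul_of_nonneg_left hcount2 (by positivity : (0:ℝ) ≤ 2 ^ d)
        have a3 := mul_le_mul_of_nonneg_left hcount3 (by positivity : (0:ℝ) ≤ 3 ^ d)
        linarith
    _ ≤ 21 * 4 ^ N := by
        have h22 : (2:ℝ) ^ d * 2 ^ d = 4 ^ d := by rw [← mul_pow]; norm_num
        have e1 : (2:ℝ) ^ d * (16 * (2 ^ d * 4 ^ (N - d))) =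
            16 * (2 ^ d * 2 ^ d * 4 ^ (N - d)) := by ring
        have e1' : (2:ℝ) ^ d * (16 * (2 ^ d * 4 ^ (N - d))) = 16 * 4 ^ N := by
          rw [e1, h22, hpow4]
        have e2 : (3:ℝ) ^ d * (4 * 4 ^ (N - d)) ≤ 4 ^ d * (4 * 4 ^ (N - d)) :=
          mul_le_mul_of_nonneg_right h34 (by positivity)
        have e3 : (4:ℝ) ^ d * (4 * 4 ^ (N - d)) = 4 * 4 ^ N := by
          rw [show (4:ℝ) ^ d * (4 * 4 ^ (N - d)) = 4 * (4 ^ d * 4 ^ (N - d)) from by ring, hpow4]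
        linarith [e1', e2, e3]

lemma master (d : ℕ) (hd : 1 ≤ d) (Γ : Finset (V d → Fin 4)) (hΓ : ∀ f ∈ Γ, IsColoring d 4 f) :
    (Γ.card : ℝ) ≤ (2:ℝ) ^ ((2:ℝ) ^ d + 3 * (2:ℝ) ^ d / (d:ℝ) : ℝ) := by
  classical
  have hdpos : 0 < d := hd
  have hdR : (0:ℝ) < d := by exact_mod_cast hd
  set N : ℕ := Fintype.card (V d) with hNdef
  have hN : N = 2 ^ d := card_V d
  set O : ℕ := Fintype.card (OddV d) with hOdef
  have hO2 : 2 * O = N := by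
    rw [hOdef, Fintype.card_subtype, hN]
    exact card_odd_even d hd
  set nR : ℝ := (N : ℝ) with hnRdef
  set oR : ℝ := (O : ℝ) with hoRdef
  have hnR : nR = (2:ℝ) ^ d := by rw [hnRdef, hN]; push_cast; ring
  have h2O : 2 * oR = nR := by rw [hnRdef, hoRdef]; exact_mod_cast hO2
  have hoRnn : (0:ℝ) ≤ oR := Nat.cast_nonneg O
  -- Finner setup
  set S : OddV d → Finset (V d) := fun j => nbr d j.val with hSdef
  set F : OddV d → (V d → Fin 4) → ℝ := fun j g => ((avail (S j) g).card : ℝ) with hFdef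
  have hf0 : ∀ (j : OddV d) (g : V d → Fin 4), 0 ≤ F j g := fun j g => Nat.cast_nonneg _
  have hjunta : ∀ (j : OddV d) (g g' : V d → Fin 4),
      (∀ e ∈ S j, g e = g' e) → F j g = F j g' := by
    intro j g g' h
    simp only [hFdef]
    rw [avail_junta (S j) g g' h]
  set A : Finset (V d) := univ.filter isEven with hAdef
  have hsub : ∀ j, S j ⊆ A := by
    intro j u hu
    exact Finset.mem_filter.2 ⟨Finset.mem_univ u, nbr_even j hu⟩
  have hcov : ∀ e ∈ A, (univ.filter fun j : OddV d => e ∈ S j).card = d := by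
    intro e he
    have hee : isEven e := (Finset.mem_filter.1 he).2
    have hbij : (univ.filter fun j : OddV d => e ∈ S j).card =
        (univ.filter ((cube d).Adj e)).card := by
      apply Finset.card_bij (fun j _ => j.val)
      · intro j hj
        have hj' : e ∈ S j := (Finset.mem_filter.1 hj).2
        exact Finset.mem_filter.2 ⟨Finset.mem_univ _, (cube d).adj_symm (mem_nbr.1 hj')⟩
      · intro j _ j' _ h
        exact Subtype.ext h
      · intro v hv
        have hadj : (cube d).Adj e v := (Finset.mem_filter.1 hv).2
        have hnv : ¬ isEven v := fun hc => ((adj_parity hadj).1 hc) hee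
        exact ⟨⟨v, hnv⟩, Finset.mem_filter.2 ⟨Finset.mem_univ _,
          mem_nbr.2 ((cube d).adj_symm hadj)⟩, rfl⟩
    rw [hbij]
    exact degree_eq e
  have hfin := finner (C := Fin 4) hdpos A S F hf0 hjunta hsub hcov
  -- rewrite the constant in hfin
  have hc4 : (Fintype.card (Fin 4) : ℝ) = 4 := by norm_num
  rw [hc4] at hfin
  -- claim A, cast
  have hA1 : (Γ.card : ℝ) * 4 ^ O ≤ ∑ g : V d → Fin 4, ∏ j : OddV d, F j g := by
    have h := claimA d Γ hΓ
    calc (Γ.card : ℝ) * 4 ^ O = ((Γ.card * 4 ^ O : ℕ) : ℝ) := by push_cast; ring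
      _ ≤ ((∑ g : V d → Fin 4, ∏ j : OddV d, (avail (nbr d j.val) g).card : ℕ) : ℝ) := by
          exact_mod_cast h
      _ = ∑ g : V d → Fin 4, ∏ j : OddV d, F j g := by push_cast; rfl
  -- moment bound
  have hmomj : ∀ j : OddV d, ∑ g : V d → Fin 4, F j g ^ d ≤ 21 * 4 ^ N :=
    fun j => moment d hd j.val
  have hmomnn : ∀ j : OddV d, (0:ℝ) ≤ ∑ g : V d → Fin 4, F j g ^ d :=
    fun j => Finset.sum_nonneg fun g _ => pow_nonneg (hf0 j g) d
  have h21nn : (0:ℝ) ≤ 21 * 4 ^ N := by positivity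
  have hprod : ∏ j : OddV d, (∑ g : V d → Fin 4, F j g ^ d) ^ (1/(d:ℝ)) ≤
      (((21:ℝ) * 4 ^ N) ^ (1/(d:ℝ))) ^ O := by
    calc ∏ j : OddV d, (∑ g : V d → Fin 4, F j g ^ d) ^ (1/(d:ℝ))
        ≤ ∏ _j : OddV d, (((21:ℝ) * 4 ^ N) ^ (1/(d:ℝ))) :=
          Finset.prod_le_prod (fun j _ => Real.rpow_nonneg (hmomnn j) _)
            (fun j _ => Real.rpow_le_rpow (hmomnn j) (hmomj j) (by positivity))
      _ = (((21:ℝ) * 4 ^ N) ^ (1/(d:ℝ))) ^ O := by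
          rw [Finset.prod_const, Finset.card_univ]
  -- combine
  set E : ℝ := (nR : ℝ) - oR * nR / d with hEdef
  have hfin2 : (Γ.card : ℝ) * 4 ^ O ≤
      (4:ℝ) ^ E * (((21:ℝ) * 4 ^ N) ^ (1/(d:ℝ))) ^ O := by
    calc (Γ.card : ℝ) * 4 ^ O ≤ ∑ g : V d → Fin 4, ∏ j : OddV d, F j g := hA1
      _ ≤ (4:ℝ) ^ E * ∏ j : OddV d, (∑ g : V d → Fin 4, F j g ^ d) ^ (1/(d:ℝ)) := hfin
      _ ≤ (4:ℝ) ^ E * (((21:ℝ) * 4 ^ N) ^ (1/(d:ℝ))) ^ O :=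
          mul_le_mul_of_nonneg_left hprod (Real.rpow_nonneg (by norm_num) E)
  -- convert everything to powers of 2
  have two_pos' : (0:ℝ) < 2 := by norm_num
  have h4E : (4:ℝ) ^ E = (2:ℝ) ^ (2 * E) := by
    rw [show (4:ℝ) = (2:ℝ) ^ ((2:ℕ):ℝ) from by
      rw [Real.rpow_natCast]; norm_num]
    rw [← Real.rpow_mul (by norm_num : (0:ℝ) ≤ 2)]
    norm_num
  have h4N : ((4:ℝ)) ^ N = (2:ℝ) ^ (2 * nR) := by
    rw [show (4:ℝ) ^ N = ((4:ℝ)) ^ ((N:ℕ):ℝ) from (Real.rpow_natCast 4 N).symm]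
    rw [show (4:ℝ) = (2:ℝ) ^ ((2:ℕ):ℝ) from by rw [Real.rpow_natCast]; norm_num]
    rw [← Real.rpow_mul (by norm_num : (0:ℝ) ≤ 2)]
    norm_num [hnRdef]
  have h21 : (21:ℝ) * 4 ^ N ≤ (2:ℝ) ^ ((5:ℝ) + 2 * nR) := by
    rw [Real.rpow_add two_pos', h4N]
    have h5 : (2:ℝ) ^ ((5:ℝ)) = 32 := by
      rw [show ((5:ℝ)) = ((5:ℕ):ℝ) from by norm_num, Real.rpow_natCast]
      norm_num
    rw [h5]
    have : (0:ℝ) ≤ (2:ℝ) ^ (2 * nR) := (Real.rpow_pos_of_pos two_pos' _).le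
    nlinarith
  have hmono : (((21:ℝ) * 4 ^ N) ^ (1/(d:ℝ))) ^ O ≤
      ((2:ℝ) ^ (((5:ℝ) + 2 * nR) * (1/(d:ℝ)))) ^ O := by
    apply pow_le_pow_left₀ (Real.rpow_nonneg h21nn _)
    rw [Real.rpow_mul (by norm_num : (0:ℝ) ≤ 2)]
    exact Real.rpow_le_rpow h21nn h21 (by positivity)
  have hpowO : ((2:ℝ) ^ (((5:ℝ) + 2 * nR) * (1/(d:ℝ)))) ^ O =
      (2:ℝ) ^ ((((5:ℝ) + 2 * nR) * (1/(d:ℝ))) * oR) := by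
    rw [← Real.rpow_natCast ((2:ℝ) ^ (((5:ℝ) + 2 * nR) * (1/(d:ℝ)))) O,
      ← Real.rpow_mul (by norm_num : (0:ℝ) ≤ 2)]
  have h4O : ((4:ℝ)) ^ O = (2:ℝ) ^ (2 * oR) := by
    rw [show (4:ℝ) ^ O = ((4:ℝ)) ^ ((O:ℕ):ℝ) from (Real.rpow_natCast 4 O).symm]
    rw [show (4:ℝ) = (2:ℝ) ^ ((2:ℕ):ℝ) from by rw [Real.rpow_natCast]; norm_num]
    rw [← Real.rpow_mul (by norm_num : (0:ℝ) ≤ 2)]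
    norm_num [hoRdef]
  -- total bound
  have htot : (Γ.card : ℝ) * (2:ℝ) ^ (2 * oR) ≤
      (2:ℝ) ^ (2 * E + (((5:ℝ) + 2 * nR) * (1/(d:ℝ))) * oR) := by
    rw [Real.rpow_add two_pos', ← h4E, ← hpowO, ← h4O]
    calc (Γ.card : ℝ) * 4 ^ O
        ≤ (4:ℝ) ^ E * (((21:ℝ) * 4 ^ N) ^ (1/(d:ℝ))) ^ O := hfin2
      _ ≤ (4:ℝ) ^ E * ((2:ℝ) ^ (((5:ℝ) + 2 * nR) * (1/(d:ℝ)))) ^ O :=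
          mul_le_mul_of_nonneg_left hmono (by positivity)
  -- divide by 2^(2 oR) and compare exponents
  have hexp : 2 * E + (((5:ℝ) + 2 * nR) * (1/(d:ℝ))) * oR - 2 * oR ≤
      (2:ℝ) ^ d + 3 * (2:ℝ) ^ d / (d:ℝ) := by
    rw [← hnR, hEdef]
    have h56 : 5 * oR * (1/(d:ℝ)) ≤ 3 * nR * (1/(d:ℝ)) := by
      apply mul_le_mul_of_nonneg_right _ (by positivity)
      nlinarith [hoRnn, h2O]
    have hid : 2 * ((nR:ℝ) - oR * nR / d) + (((5:ℝ) + 2 * nR) * (1/(d:ℝ))) * oR - 2 * oR =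
        2 * nR - 2 * oR + 5 * oR * (1/(d:ℝ)) := by
      field_simp
      ring
    rw [hid]
    have : 2 * nR - 2 * oR = nR := by linarith [h2O]
    rw [this]
    have h3 : 3 * nR * (1/(d:ℝ)) = 3 * nR / d := by ring
    linarith [h56]
  have hfinal : (Γ.card : ℝ) ≤ (2:ℝ) ^ ((2:ℝ) ^ d + 3 * (2:ℝ) ^ d / (d:ℝ)) := by
    have hpos2 : (0:ℝ) < (2:ℝ) ^ (2 * oR) := Real.rpow_pos_of_pos two_pos' _
    have h1 : (Γ.card : ℝ) ≤
        (2:ℝ) ^ (2 * E + (((5:ℝ) + 2 * nR) * (1/(d:ℝ))) * oR) / (2:ℝ) ^ (2 * oR) := by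
      rw [le_div_iff₀ hpos2]
      exact htot
    have h2 : ((2:ℝ) ^ (2 * E + (((5:ℝ) + 2 * nR) * (1/(d:ℝ))) * oR)) / (2:ℝ) ^ (2 * oR) =
        (2:ℝ) ^ (2 * E + (((5:ℝ) + 2 * nR) * (1/(d:ℝ))) * oR - 2 * oR) :=
      (Real.rpow_sub two_pos' _ _).symm
    rw [h2] at h1
    exact h1.trans (Real.rpow_le_rpow_of_exponent_le (by norm_num) hexp)
  exact hfinal


/-- `log₂ C₄(Q_d) ≤ N + O(N/d)`, and likewise for any nonempty family of proper
4-colorings of `Q_d`. -/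
theorem log_count_colorings_le :
    ∃ K : ℝ, 0 < K ∧ ∀ d : ℕ, 1 ≤ d →
      Real.logb 2 (Nat.card {f : V d → Fin 4 // IsColoring d 4 f} : ℝ) ≤
          (2 : ℝ) ^ d + K * (2 : ℝ) ^ d / d
      ∧ ∀ Γ : Finset (V d → Fin 4), Γ.Nonempty → (∀ f ∈ Γ, IsColoring d 4 f) →
          Real.logb 2 (Γ.card : ℝ) ≤ (2 : ℝ) ^ d + K * (2 : ℝ) ^ d / d := by
  classical
  refine ⟨3, by norm_num, fun d hd => ?_⟩
  -- the explicit coloring by parity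
  have hcol : IsColoring d 4 (fun v => if isEven v then (0 : Fin 4) else 1) := by
    intro u v huv
    have hpar := adj_parity huv
    by_cases hu : isEven u
    · have hv : ¬ isEven v := fun hc => (hpar.1 hc) hu
      simp [hu, hv]
    · have hv : isEven v := hpar.2 hu
      simp [hu, hv]
  have hgen : ∀ Γ : Finset (V d → Fin 4), Γ.Nonempty → (∀ f ∈ Γ, IsColoring d 4 f) →
      Real.logb 2 (Γ.card : ℝ) ≤ (2 : ℝ) ^ d + 3 * (2 : ℝ) ^ d / d := by
    intro Γ hne hΓ
    have hpos : (0:ℝ) < (Γ.card : ℝ) := by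
      exact_mod_cast Finset.card_pos.2 hne
    rw [Real.logb_le_iff_le_rpow (by norm_num : (1:ℝ) < 2) hpos]
    exact master d hd Γ hΓ
  constructor
  · -- the full count
    set Γall : Finset (V d → Fin 4) := univ.filter (IsColoring d 4) with hΓall
    have hcard : (Nat.card {f : V d → Fin 4 // IsColoring d 4 f} : ℝ) = (Γall.card : ℝ) := by
      rw [Nat.card_eq_fintype_card, Fintype.card_subtype]
    rw [hcard]
    apply hgen
    · exact ⟨_, Finset.mem_filter.2 ⟨Finset.mem_univ _, hcol⟩⟩
    · intro f hf
      exact (Finset.mem_filter.1 hf).2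
  · exact hgen
end

section
/- Let (C,D) be an ordered equipartition of {1,2,3,4} and let k ≥ 0. The number of proper 4-colorings f of Q_d whose set of bad vertices (vertices where f disagrees with (C,D)) has size exactly k and has any two of its elements at graph distance at least 3 is at most C(N,k)·2^{N-dk}, where N = 2^d. Consequently, summing over the six ordered equipartitions and all k, the total count is less than 6e·2^N. -/
open Finset

/-- `(C, D)` is an ordered equipartition of the color set `{1,2,3,4}` (here `Fin 4`). -/
def IsEquip (C D : Finset (Fin 4)) : Prop :=
  C.card = 2 ∧ D.card = 2 ∧ Disjoint C D ∧ C ∪ D = Finset.univ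

/-- The set of vertices at which `f` disagrees with the ordered equipartition `(C, D)`
(agreement at `v` means: `f v ∈ C ↔ v` is even); such vertices are called bad. -/
def badSet (d : ℕ) (f : V d → Fin 4) (C : Finset (Fin 4)) : Set (V d) :=
  {v | ¬ (f v ∈ C ↔ isEven v)}

/-- The number of proper 4-colorings of `Q_d` with exactly `k` bad vertices (w.r.t. the
phase `(C, D)`), any two of which are at graph distance at least 3. -/
noncomputable def idealCount (d : ℕ) (C : Finset (Fin 4)) (k : ℕ) : ℕ :=
  Nat.card {f : V d → Fin 4 // IsColoring d 4 f ∧ (badSet d f C).ncard = k ∧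
    (badSet d f C).Pairwise (fun u v => 3 ≤ (cube d).dist u v)}

lemma card_two_unique {S : Finset (Fin 4)} (h : S.card = 2) {a b c : Fin 4}
    (ha : a ∈ S) (hb : b ∈ S) (hc : c ∈ S) (hac : a ≠ c) (hbc : b ≠ c) : a = b := by
  obtain ⟨x, y, hxy, rfl⟩ := Finset.card_eq_two.mp h
  simp only [Finset.mem_insert, Finset.mem_singleton] at ha hb hc
  rcases ha with rfl|rfl <;> rcases hb with rfl|rfl <;> rcases hc with rfl|rfl <;> tauto

private def par {d : ℕ} (v : V d) : ZMod 2 := ∑ i : Fin d, if v i then 1 else 0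

lemma isEven_iff_par {d : ℕ} (v : V d) : isEven v ↔ par v = 0 := by
  unfold isEven par
  rw [even_iff_two_dvd, ← ZMod.natCast_eq_zero_iff, Finset.card_filter]
  push_cast
  rfl

lemma adj_isEven {d : ℕ} {u v : V d} (h : (cube d).Adj u v) : (isEven u ↔ ¬ isEven v) := by
  have hsum : (∑ i : Fin d, if u i ≠ v i then (1 : ZMod 2) else 0) = 1 := by
    have h' : ((Finset.univ.filter fun i => u i ≠ v i).card : ZMod 2) = 1 := by
      rw [show (Finset.univ.filter fun i => u i ≠ v i).card = 1 from h]; norm_num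
    rw [Finset.card_filter] at h'
    push_cast at h'
    exact h'
  have key : par v = par u + 1 := by
    rw [← hsum]
    unfold par
    rw [← Finset.sum_add_distrib]
    apply Finset.sum_congr rfl
    intro i _
    cases hu : u i <;> cases hv : v i <;> simp [hu, hv] <;> decide
  rw [isEven_iff_par, isEven_iff_par, key]
  have : ∀ x : ZMod 2, (x = 0 ↔ ¬ (x + 1 = 0)) := by decide
  exact this (par u)

lemma cube_degree {d : ℕ} (v : V d) :
    (Finset.univ.filter fun w => (cube d).Adj v w).card = d := by
  have : ((Finset.univ : Finset (Fin d)).card = (Finset.univ.filter fun w => (cube d).Adj v w).card) := by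
    apply Finset.card_bij (fun i _ => Function.update v i (!(v i)))
    · intro i _
      simp only [Finset.mem_filter, Finset.mem_univ, true_and]
      show (Finset.univ.filter fun j => v j ≠ Function.update v i (!(v i)) j).card = 1
      have : (Finset.univ.filter fun j => v j ≠ Function.update v i (!(v i)) j) = {i} := by
        ext j
        simp only [Finset.mem_filter, Finset.mem_univ, true_and, Finset.mem_singleton]
        constructor
        · intro hj
          by_contra hji
          rw [Function.update_of_ne hji] at hj
          exact hj rfl
        · rintro rfl
          rw [Function.update_self]
          cases v j <;> simp
      rw [this]; rfl
    · intro i _ j _ hij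
      by_contra hne
      have := congrFun hij i
      rw [Function.update_of_ne hne] at this
      rw [Function.update_self] at this
      revert this; cases v i <;> simp
    · intro w hw
      simp only [Finset.mem_filter, Finset.mem_univ, true_and] at hw
      have hw' : (Finset.univ.filter fun j => v j ≠ w j).card = 1 := hw
      obtain ⟨i, hi⟩ := Finset.card_eq_one.mp hw'
      refine ⟨i, Finset.mem_univ i, ?_⟩
      funext j
      by_cases hji : j = i
      · subst hji
        rw [Function.update_self]
        have : v j ≠ w j := by
          have : j ∈ ({j} : Finset (Fin d)) := Finset.mem_singleton_self j
          rw [← hi] at this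
          exact (Finset.mem_filter.mp this).2
        cases hv : v j <;> cases hw2 : w j <;> simp_all
      · rw [Function.update_of_ne hji]
        have : j ∉ (Finset.univ.filter fun j => v j ≠ w j) := by
          rw [hi]; simpa using hji
        simpa using this
  rw [← this]
  simp

lemma dist_le_two {d : ℕ} {u v w : V d} (h1 : (cube d).Adj u w) (h2 : (cube d).Adj w v) :
    (cube d).dist u v ≤ 2 := by
  simpa using SimpleGraph.dist_le (SimpleGraph.Walk.cons h1 (SimpleGraph.Walk.cons h2 SimpleGraph.Walk.nil))

lemma dist_le_one {d : ℕ} {u v : V d} (h1 : (cube d).Adj u v) :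
    (cube d).dist u v ≤ 1 := by
  simpa using SimpleGraph.dist_le (SimpleGraph.Walk.cons h1 SimpleGraph.Walk.nil)

private def Nbr {d : ℕ} (B : Finset (V d)) : Finset (V d) :=
  B.biUnion fun u => Finset.univ.filter fun w => (cube d).Adj u w

private def gEnc (cm dm : Fin 4) {d : ℕ} (f : V d → Fin 4) (v : V d) : Bool :=
  decide (f v = cm ∨ f v = dm)

lemma pair_eq {C D : Finset (Fin 4)} (hCD : IsEquip C D) {cm dm a b : Fin 4}
    (hcm : cm ∈ C) (hdm : dm ∈ D)
    (hab : (a ∈ C ∧ b ∈ C) ∨ (a ∈ D ∧ b ∈ D))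
    (h : (decide (a = cm ∨ a = dm)) = (decide (b = cm ∨ b = dm))) : a = b := by
  obtain ⟨h1, h2, h3, _⟩ := hCD
  rw [decide_eq_decide] at h
  rcases hab with ⟨ha, hb⟩ | ⟨ha, hb⟩
  · have had : a ≠ dm := fun e => (Finset.disjoint_left.mp h3 ha) (e ▸ hdm)
    have hbd : b ≠ dm := fun e => (Finset.disjoint_left.mp h3 hb) (e ▸ hdm)
    by_cases hac : a = cm
    · have : b = cm := by tauto
      rw [hac, this]
    · have hbc : b ≠ cm := by tauto
      exact card_two_unique h1 ha hb hcm hac hbc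
  · have hac : a ≠ cm := fun e => (Finset.disjoint_left.mp h3 (e ▸ hcm)) ha
    have hbc : b ≠ cm := fun e => (Finset.disjoint_left.mp h3 (e ▸ hcm)) hb
    by_cases had : a = dm
    · have : b = dm := by tauto
      rw [had, this]
    · have hbd : b ≠ dm := by tauto
      exact card_two_unique h2 ha hb hdm had hbd

lemma inj_core {d : ℕ} {C D : Finset (Fin 4)} (hCD : IsEquip C D) {cm dm : Fin 4}
    (hcm : cm ∈ C) (hdm : dm ∈ D) {f1 f2 : V d → Fin 4}
    (hc1 : IsColoring d 4 f1) (hc2 : IsColoring d 4 f2)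
    {B : Finset (V d)}
    (hB1 : ∀ v, v ∈ B ↔ v ∈ badSet d f1 C) (hB2 : ∀ v, v ∈ B ↔ v ∈ badSet d f2 C)
    (hpw : (B : Set (V d)).Pairwise (fun u v => 3 ≤ (cube d).dist u v))
    (hg : ∀ v, v ∉ Nbr B → gEnc cm dm f1 v = gEnc cm dm f2 v) : f1 = f2 := by
  have hUD : ∀ x : Fin 4, x ∉ C → x ∈ D := by
    intro x hx
    have hx2 : x ∈ C ∪ D := by rw [hCD.2.2.2]; exact Finset.mem_univ x
    rcases Finset.mem_union.mp hx2 with h | h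
    · exact absurd h hx
    · exact h
  have hfc : ∀ (f : V d → Fin 4), (∀ v, v ∈ B ↔ v ∈ badSet d f C) →
      ∀ v, (f v ∈ C ↔ (isEven v ↔ v ∉ B)) := by
    intro f hB v
    have := hB v
    simp only [badSet, Set.mem_setOf_eq] at this
    tauto
  have key1 : ∀ v, (f1 v ∈ C ∧ f2 v ∈ C) ∨ (f1 v ∈ D ∧ f2 v ∈ D) := by
    intro v
    by_cases h : isEven v ↔ v ∉ B
    · exact Or.inl ⟨(hfc f1 hB1 v).mpr h, (hfc f2 hB2 v).mpr h⟩
    · refine Or.inr ⟨hUD _ ?_, hUD _ ?_⟩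
      · intro hc; exact h ((hfc f1 hB1 v).mp hc)
      · intro hc; exact h ((hfc f2 hB2 v).mp hc)
  have keyGood : ∀ v, v ∉ Nbr B → f1 v = f2 v := by
    intro v hv
    exact pair_eq hCD hcm hdm (key1 v) (hg v hv)
  funext v
  by_cases hvN : v ∈ Nbr B
  · obtain ⟨u, huB, hv'⟩ := Finset.mem_biUnion.mp hvN
    have hadj : (cube d).Adj u v := (Finset.mem_filter.mp hv').2
    have huv : u ≠ v := hadj.ne
    have hvB : v ∉ B := by
      intro hvB
      have h3 := hpw huB hvB huv
      have h1 := dist_le_one hadj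
      omega
    have huN : u ∉ Nbr B := by
      intro huN
      obtain ⟨u', hu'B, hu''⟩ := Finset.mem_biUnion.mp huN
      have hadj' : (cube d).Adj u' u := (Finset.mem_filter.mp hu'').2
      have h3 := hpw hu'B huB hadj'.ne
      have h1 := dist_le_one hadj'
      omega
    have hfu : f1 u = f2 u := keyGood u huN
    have hpar := adj_isEven hadj
    have h1v := hfc f1 hB1 v
    have h2v := hfc f2 hB2 v
    have h1u := hfc f1 hB1 u
    have hne1 : f1 v ≠ f1 u := (hc1 u v hadj).symm
    have hne2 : f2 v ≠ f1 u := by rw [hfu]; exact (hc2 u v hadj).symm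
    by_cases hev : isEven v
    · have m1v : f1 v ∈ C := h1v.mpr (iff_of_true hev hvB)
      have m2v : f2 v ∈ C := h2v.mpr (iff_of_true hev hvB)
      have m1u : f1 u ∈ C := h1u.mpr (iff_of_false (fun h => (hpar.mp h) hev) (not_not_intro huB))
      exact card_two_unique hCD.1 m1v m2v m1u hne1 hne2
    · have m1v : f1 v ∈ D := hUD _ (fun hc => hev ((h1v.mp hc).mpr hvB))
      have m2v : f2 v ∈ D := hUD _ (fun hc => hev ((h2v.mp hc).mpr hvB))
      have m1u : f1 u ∈ D := hUD _ (fun hc => ((h1u.mp hc).mp (hpar.mpr hev)) huB)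
      exact card_two_unique hCD.2.1 m1v m2v m1u hne1 hne2
  · exact keyGood v hvN

lemma Nbr_card {d : ℕ} {B : Finset (V d)}
    (hpw : (B : Set (V d)).Pairwise (fun u v => 3 ≤ (cube d).dist u v)) :
    (Nbr B).card = d * B.card := by
  unfold Nbr
  rw [Finset.card_biUnion]
  · rw [Finset.sum_congr rfl (fun u _ => cube_degree u), Finset.sum_const, smul_eq_mul, mul_comm]
  · intro u1 h1 u2 h2 hne
    rw [Function.onFun, Finset.disjoint_left]
    intro w hw1 hw2
    have a1 : (cube d).Adj u1 w := (Finset.mem_filter.mp hw1).2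
    have a2 : (cube d).Adj u2 w := (Finset.mem_filter.mp hw2).2
    have h3 := hpw h1 h2 hne
    have h2' := dist_le_two a1 a2.symm
    omega

lemma main_bound (d : ℕ) (C D : Finset (Fin 4)) (hCD : IsEquip C D) (k : ℕ) :
    (idealCount d C k : ℝ) ≤ ((2 ^ d).choose k : ℝ) * (2 : ℝ) ^ ((2 : ℝ) ^ d - (d : ℝ) * k) := by
  classical
  have hCne : C.Nonempty := Finset.card_pos.mp (by rw [hCD.1]; norm_num)
  have hDne : D.Nonempty := Finset.card_pos.mp (by rw [hCD.2.1]; norm_num)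
  set cm := C.min' hCne with hcm_def
  set dm := D.min' hDne with hdm_def
  have hcm : cm ∈ C := Finset.min'_mem _ _
  have hdm : dm ∈ D := Finset.min'_mem _ _
  set P : (V d → Fin 4) → Prop := fun f => IsColoring d 4 f ∧ (badSet d f C).ncard = k ∧
    (badSet d f C).Pairwise (fun u v => 3 ≤ (cube d).dist u v) with hP_def
  set F : Finset (V d → Fin 4) := Finset.univ.filter P with hF_def
  have hcount : idealCount d C k = F.card := by
    rw [idealCount, Nat.card_eq_fintype_card, Fintype.card_subtype]
  set badF : (V d → Fin 4) → Finset (V d) := fun f => (Set.toFinite (badSet d f C)).toFinset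
    with hbadF_def
  set S : Finset (Finset (V d)) := (Finset.univ.powersetCard k).filter
    (fun B => (B : Set (V d)).Pairwise (fun u v => 3 ≤ (cube d).dist u v)) with hS_def
  have hmapS : ∀ f ∈ F, badF f ∈ S := by
    intro f hf
    obtain ⟨_, hk, hpw⟩ := (Finset.mem_filter.mp hf).2
    rw [hS_def, Finset.mem_filter, Finset.mem_powersetCard_univ]
    refine ⟨?_, ?_⟩
    · rw [hbadF_def]
      rw [← Set.ncard_eq_toFinset_card _ (Set.toFinite (badSet d f C))]
      exact hk
    · rw [hbadF_def]
      simpa [Set.Finite.coe_toFinset] using hpw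
  have hsplit : F.card = ∑ B ∈ S, (F.filter (fun f => badF f = B)).card :=
    Finset.card_eq_sum_card_fiberwise hmapS
  have hfiber : ∀ B ∈ S, (F.filter (fun f => badF f = B)).card ≤
      2 ^ ((Finset.univ \ Nbr B).card) := by
    intro B hB
    have hpwB : (B : Set (V d)).Pairwise (fun u v => 3 ≤ (cube d).dist u v) :=
      (Finset.mem_filter.mp hB).2
    have hinj : Set.InjOn (fun f (x : ↥((Finset.univ : Finset (V d)) \ Nbr B)) => gEnc cm dm f x.1)
        ↑(F.filter (fun f => badF f = B)) := by
      intro f1 hf1 f2 hf2 heq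
      simp only [Finset.coe_filter, Set.mem_setOf_eq] at hf1 hf2
      obtain ⟨hf1F, hB1⟩ := hf1
      obtain ⟨hf2F, hB2⟩ := hf2
      have hP1 : P f1 := (Finset.mem_filter.mp hf1F).2
      have hP2 : P f2 := (Finset.mem_filter.mp hf2F).2
      have hmem1 : ∀ v, v ∈ B ↔ v ∈ badSet d f1 C := by
        intro v; rw [← hB1, hbadF_def]; exact (Set.Finite.mem_toFinset _)
      have hmem2 : ∀ v, v ∈ B ↔ v ∈ badSet d f2 C := by
        intro v; rw [← hB2, hbadF_def]; exact (Set.Finite.mem_toFinset _)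
      exact inj_core hCD hcm hdm hP1.1 hP2.1 hmem1 hmem2 hpwB
        (fun v hv => congrFun heq ⟨v, by simp [hv]⟩)
    calc (F.filter (fun f => badF f = B)).card
        ≤ (Finset.univ : Finset (↥((Finset.univ : Finset (V d)) \ Nbr B) → Bool)).card :=
          Finset.card_le_card_of_injOn _ (fun _ _ => Finset.mem_univ _) hinj
      _ = 2 ^ ((Finset.univ \ Nbr B).card) := by
          rw [Finset.card_univ, Fintype.card_fun, Fintype.card_coe, Fintype.card_bool]
  have hfiberR : ∀ B ∈ S, ((F.filter (fun f => badF f = B)).card : ℝ) ≤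
      (2 : ℝ) ^ ((2 : ℝ) ^ d - (d : ℝ) * k) := by
    intro B hB
    have hBk : B.card = k := Finset.mem_powersetCard_univ.mp (Finset.mem_filter.mp hB).1
    have hpwB : (B : Set (V d)).Pairwise (fun u v => 3 ≤ (cube d).dist u v) :=
      (Finset.mem_filter.mp hB).2
    have hNbr : (Nbr B).card = d * k := by rw [Nbr_card hpwB, hBk]
    have hdk : d * k ≤ 2 ^ d := by
      have := Finset.card_le_univ (Nbr B)
      rwa [hNbr, card_V] at this
    have hsd : (Finset.univ \ Nbr B).card = 2 ^ d - d * k := by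
      rw [Finset.card_sdiff_of_subset (Finset.subset_univ _), Finset.card_univ, card_V, hNbr]
    calc ((F.filter (fun f => badF f = B)).card : ℝ)
        ≤ ((2 : ℕ) : ℝ) ^ ((Finset.univ \ Nbr B).card) := by
          exact_mod_cast Nat.cast_le.mpr (hfiber B hB)
      _ = (2 : ℝ) ^ (((2 ^ d - d * k : ℕ) : ℝ)) := by
          rw [hsd, Real.rpow_natCast]; norm_num
      _ = (2 : ℝ) ^ ((2 : ℝ) ^ d - (d : ℝ) * k) := by
          congr 1
          rw [Nat.cast_sub hdk]
          push_cast
          ring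
  have hScard : S.card ≤ (2 ^ d).choose k := by
    have h1 : S.card ≤ (Finset.powersetCard k (Finset.univ : Finset (V d))).card :=
      Finset.card_filter_le _ _
    have h2 : (Finset.powersetCard k (Finset.univ : Finset (V d))).card = (2 ^ d).choose k := by
      rw [Finset.card_powersetCard, Finset.card_univ, card_V]
    omega
  have hsum : (idealCount d C k : ℝ) ≤ (S.card : ℝ) * (2 : ℝ) ^ ((2 : ℝ) ^ d - (d : ℝ) * k) := by
    calc (idealCount d C k : ℝ) = (F.card : ℝ) := by rw [hcount]
      _ = ∑ B ∈ S, ((F.filter (fun f => badF f = B)).card : ℝ) := by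
          rw [hsplit]; push_cast; rfl
      _ ≤ ∑ B ∈ S, (2 : ℝ) ^ ((2 : ℝ) ^ d - (d : ℝ) * k) := Finset.sum_le_sum hfiberR
      _ = (S.card : ℝ) * (2 : ℝ) ^ ((2 : ℝ) ^ d - (d : ℝ) * k) := by
          rw [Finset.sum_const, nsmul_eq_mul]
  exact le_trans hsum (mul_le_mul_of_nonneg_right (by exact_mod_cast hScard)
    (Real.rpow_nonneg (by norm_num) _))

lemma isEquip_iff {C D : Finset (Fin 4)} : IsEquip C D ↔ C.card = 2 ∧ D = Cᶜ := by
  constructor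
  · rintro ⟨h1, h2, h3, h4⟩
    refine ⟨h1, ?_⟩
    apply Finset.eq_of_subset_of_card_le
    · intro x hx
      rw [Finset.mem_compl]
      exact fun hc => (Finset.disjoint_left.mp h3 hc) hx
    · rw [Finset.card_compl, h1, h2]
      simp
  · rintro ⟨h1, rfl⟩
    refine ⟨h1, ?_, disjoint_compl_right, Finset.union_compl _⟩
    rw [Finset.card_compl, h1]
    simp

lemma idealCount_eq_zero {d : ℕ} (C : Finset (Fin 4)) {k : ℕ} (hk : 2 ^ d < k) :
    idealCount d C k = 0 := by
  rw [idealCount, Nat.card_eq_zero]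
  left
  constructor
  rintro ⟨f, _, hcard, _⟩
  have h1 : (badSet d f C).ncard ≤ (Set.univ : Set (V d)).ncard :=
    Set.ncard_le_ncard (Set.subset_univ _) Set.finite_univ
  rw [Set.ncard_univ, Nat.card_eq_fintype_card, card_V] at h1
  omega

lemma tsum_bound (d : ℕ) (C D : Finset (Fin 4)) (hCD : IsEquip C D) :
    (∑' k : ℕ, (idealCount d C k : ℝ)) < Real.exp 1 * (2 : ℝ) ^ (2 ^ d : ℕ) := by
  have hzero : ∀ k ∉ Finset.range (2 ^ d + 1), (idealCount d C k : ℝ) = 0 := by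
    intro k hk
    rw [Finset.mem_range, not_lt] at hk
    rw [idealCount_eq_zero C (by omega)]
    norm_num
  rw [tsum_eq_sum hzero]
  set x : ℝ := ((2 : ℝ) ^ d)⁻¹ with hx_def
  have hxpos : 0 < x := by positivity
  have hb : ∀ k ∈ Finset.range (2 ^ d + 1), (idealCount d C k : ℝ) ≤
      (2 : ℝ) ^ (2 ^ d : ℕ) * (x ^ k * 1 ^ (2 ^ d - k) * ((2 ^ d).choose k : ℝ)) := by
    intro k _
    have h1 := main_bound d C D hCD k
    have h2 : (2 : ℝ) ^ ((2 : ℝ) ^ d - (d : ℝ) * k) = (2 : ℝ) ^ (2 ^ d : ℕ) * x ^ k := by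
      rw [Real.rpow_sub (by norm_num)]
      have ha : ((2 : ℝ) ^ d) = (((2 ^ d : ℕ) : ℝ)) := by push_cast; ring
      have hb' : ((d : ℝ) * k) = (((d * k : ℕ) : ℝ)) := by push_cast; ring
      rw [ha, hb', Real.rpow_natCast, Real.rpow_natCast]
      rw [div_eq_mul_inv]
      congr 1
      rw [pow_mul, ← inv_pow]
    refine le_trans h1 (le_of_eq ?_)
    rw [h2]; ring
  have hsum := Finset.sum_le_sum hb
  rw [← Finset.mul_sum, ← add_pow x 1 (2 ^ d)] at hsum
  have hlt : (x + 1) ^ (2 ^ d) < Real.exp 1 := by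
    have h1 : x + 1 < Real.exp x := Real.add_one_lt_exp (ne_of_gt hxpos)
    have h2 : (x + 1) ^ (2 ^ d) < (Real.exp x) ^ (2 ^ d) :=
      pow_lt_pow_left₀ h1 (by positivity) (by positivity)
    have h3 : (Real.exp x) ^ (2 ^ d) = Real.exp ((2 ^ d : ℕ) * x) := (Real.exp_nat_mul x (2 ^ d)).symm
    have h4 : ((2 ^ d : ℕ) : ℝ) * x = 1 := by
      rw [hx_def]
      push_cast
      field_simp
    rw [h3, h4] at h2
    exact h2
  calc (∑ k ∈ Finset.range (2 ^ d + 1), (idealCount d C k : ℝ))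
      ≤ (2 : ℝ) ^ (2 ^ d : ℕ) * (x + 1) ^ (2 ^ d) := hsum
    _ < (2 : ℝ) ^ (2 ^ d : ℕ) * Real.exp 1 := by
        apply mul_lt_mul_of_pos_left hlt (by positivity)
    _ = Real.exp 1 * (2 : ℝ) ^ (2 ^ d : ℕ) := by ring

open scoped Classical in
/-- For each ordered equipartition `(C,D)` and each `k`, the number of proper 4-colorings
with exactly `k` pairwise-distance-`≥ 3` bad vertices is at most `C(N,k) 2^{N-dk}`;
summing over the six equipartitions and all `k` gives less than `6e·2^N`. -/
theorem ideal_colorings_count (d : ℕ) :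
    (∀ C D : Finset (Fin 4), IsEquip C D → ∀ k : ℕ,
      (idealCount d C k : ℝ) ≤
        ((2 ^ d).choose k : ℝ) * (2 : ℝ) ^ ((2 : ℝ) ^ d - (d : ℝ) * k))
    ∧ (∑ C : Finset (Fin 4), ∑ D : Finset (Fin 4),
        if IsEquip C D then ∑' k : ℕ, (idealCount d C k : ℝ) else 0) <
      6 * Real.exp 1 * (2 : ℝ) ^ (2 ^ d : ℕ) := by
  constructor
  · intro C D h k
    exact main_bound d C D h k
  · set T : Finset (Fin 4) → ℝ := fun C => ∑' k : ℕ, (idealCount d C k : ℝ) with hT_def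
    have inner : ∀ C : Finset (Fin 4),
        (∑ D : Finset (Fin 4), if IsEquip C D then T C else 0) =
          if C.card = 2 then T C else 0 := by
      intro C
      by_cases hC : C.card = 2
      · rw [Finset.sum_eq_single Cᶜ]
        · rw [if_pos (isEquip_iff.mpr ⟨hC, rfl⟩), if_pos hC]
        · intro D _ hD
          rw [if_neg (fun h => hD (isEquip_iff.mp h).2)]
        · intro h
          exact absurd (Finset.mem_univ _) h
      · rw [if_neg hC]
        apply Finset.sum_eq_zero
        intro D _
        rw [if_neg (fun h => hC (isEquip_iff.mp h).1)]
    rw [Finset.sum_congr rfl (fun C _ => inner C)]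
    have h1 : ∀ C ∈ (Finset.univ : Finset (Finset (Fin 4))),
        (if C.card = 2 then T C else 0) ≤
          (if C.card = 2 then Real.exp 1 * (2 : ℝ) ^ (2 ^ d : ℕ) else 0) := by
      intro C _
      by_cases hC : C.card = 2
      · rw [if_pos hC, if_pos hC]
        exact le_of_lt (tsum_bound d C Cᶜ (isEquip_iff.mpr ⟨hC, rfl⟩))
      · rw [if_neg hC, if_neg hC]
    have h2 : ∃ C ∈ (Finset.univ : Finset (Finset (Fin 4))),
        (if C.card = 2 then T C else 0) <
          (if C.card = 2 then Real.exp 1 * (2 : ℝ) ^ (2 ^ d : ℕ) else 0) := by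
      refine ⟨({0, 1} : Finset (Fin 4)), Finset.mem_univ _, ?_⟩
      have hc : ({0, 1} : Finset (Fin 4)).card = 2 := by decide
      rw [if_pos hc, if_pos hc]
      exact tsum_bound d _ _ (isEquip_iff.mpr ⟨hc, rfl⟩)
    have h3 := Finset.sum_lt_sum h1 h2
    have h4 : (∑ C : Finset (Fin 4), if C.card = 2 then Real.exp 1 * (2 : ℝ) ^ (2 ^ d : ℕ) else 0)
        = 6 * Real.exp 1 * (2 : ℝ) ^ (2 ^ d : ℕ) := by
      rw [← Finset.sum_filter]
      rw [Finset.sum_const]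
      have hcard : ((Finset.univ : Finset (Finset (Fin 4))).filter (fun C => C.card = 2)).card = 6 := by
        have e1 : ((Finset.univ : Finset (Finset (Fin 4))).filter (fun C => C.card = 2)) =
            Finset.powersetCard 2 (Finset.univ : Finset (Fin 4)) := by
          rw [Finset.powersetCard_eq_filter, Finset.powerset_univ]
        rw [e1, Finset.card_powersetCard, Finset.card_univ, Fintype.card_fin]
        decide
      rw [hcard, nsmul_eq_mul]
      push_cast
      ring
    rw [← h4]
    exact h3
end

section
/- Let f be a proper 4-coloring of Q_d and let Z be a 2-linked subset of O such that every vertex of Z is bad for the phase ({1,2},{3,4}) (i.e., f(z) ∈ {1,2} for all z ∈ Z) and every vertex of N(Z) is good (i.e., f(v) ∈ {1,2} for all v ∈ N(Z) ⊆ E). Then f is constant on Z and constant on N(Z); moreover, if f ≡ c on Z with c ∈ {1,2}, then f equals the other element of {1,2} on all of N(Z). The analogous statement holds for 2-linked Z ⊆ E with all of Z bad (f(Z) ⊆ {3,4}) and all of N(Z) ⊆ O good (f(N(Z)) ⊆ {3,4}). -/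
open Finset

/-- The neighborhood of a set of vertices. -/
def nbhd (d : ℕ) (X : Set (V d)) : Set (V d) := {u | ∃ v ∈ X, (cube d).Adj u v}

/-- `A` is 2-linked: any two of its vertices are joined by a chain of vertices of `A` in which
consecutive vertices are at graph distance at most 2. -/
def TwoLinked (d : ℕ) (A : Set (V d)) : Prop :=
  ∀ x ∈ A, ∀ y ∈ A,
    Relation.ReflTransGen (fun a b => a ∈ A ∧ b ∈ A ∧ (cube d).dist a b ≤ 2) x y

/-- `C` is a 2-component of `A`: a maximal 2-linked (nonempty) subset of `A`. -/
def Is2Comp (d : ℕ) (A C : Set (V d)) : Prop :=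
  C ⊆ A ∧ C.Nonempty ∧ TwoLinked d C ∧
    ∀ C' : Set (V d), C ⊆ C' → C' ⊆ A → TwoLinked d C' → C' = C

lemma cube_reachable_aux (d : ℕ) :
    ∀ n : ℕ, ∀ u v : V d, (Finset.univ.filter fun i => u i ≠ v i).card = n →
      (cube d).Reachable u v := by
  intro n
  induction n with
  | zero =>
    intro u v h
    have : u = v := by
      funext i
      by_contra hne
      have : i ∈ Finset.univ.filter fun i => u i ≠ v i := by simp [hne]
      rw [Finset.card_eq_zero.mp h] at this
      simp at this
    exact this ▸ SimpleGraph.Reachable.refl u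
  | succ n ih =>
    intro u v h
    have hne : (Finset.univ.filter fun i => u i ≠ v i).Nonempty := by
      rw [← Finset.card_pos, h]; omega
    obtain ⟨i, hi⟩ := hne
    simp only [Finset.mem_filter] at hi
    set u' : V d := Function.update u i (v i) with hu'
    have hadj : (cube d).Adj u u' := by
      show (Finset.univ.filter fun j => u j ≠ u' j).card = 1
      have : (Finset.univ.filter fun j => u j ≠ u' j) = {i} := by
        ext j
        simp only [Finset.mem_filter, Finset.mem_univ, true_and, Finset.mem_singleton]
        constructor
        · intro hj
          by_contra hji
          rw [hu', Function.update_of_ne hji] at hj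
          exact hj rfl
        · intro hj; subst hj
          rw [hu', Function.update_self]
          exact hi.2
      rw [this]; rfl
    have hcard : (Finset.univ.filter fun j => u' j ≠ v j).card = n := by
      have : (Finset.univ.filter fun j => u' j ≠ v j)
          = (Finset.univ.filter fun j => u j ≠ v j).erase i := by
        ext j
        simp only [Finset.mem_filter, Finset.mem_univ, true_and, Finset.mem_erase]
        constructor
        · intro hj
          have hji : j ≠ i := by
            intro e; subst e
            rw [hu', Function.update_self] at hj
            exact hj rfl
          rw [hu', Function.update_of_ne hji] at hj
          exact ⟨hji, hj⟩
        · intro ⟨hji, hj⟩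
          rw [hu', Function.update_of_ne hji]
          exact hj
      rw [this, Finset.card_erase_of_mem (by simp [hi.2]), h]; omega
    exact hadj.reachable.trans (ih u' v hcard)

lemma cube_reachable (d : ℕ) (u v : V d) : (cube d).Reachable u v :=
  cube_reachable_aux d _ u v rfl

lemma cube_adj_parity {d : ℕ} {u v : V d} (h : (cube d).Adj u v) :
    isEven u ↔ ¬ isEven v := by
  obtain ⟨i, hi⟩ := Finset.card_eq_one.mp h
  have hiff : ∀ j, u j ≠ v j ↔ j = i := by
    intro j
    rw [← Finset.mem_singleton, ← hi]
    simp
  have hne : u i ≠ v i := (hiff i).mpr rfl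
  have heq : ∀ j, j ≠ i → u j = v j := fun j hj => by
    by_contra hc; exact hj ((hiff j).mp hc)
  set A := Finset.univ.filter fun j => u j = true with hA
  set B := Finset.univ.filter fun j => v j = true with hB
  have key : A.card = B.card + 1 ∨ B.card = A.card + 1 := by
    rcases Bool.eq_false_or_eq_true (u i) with hu | hu
    · left
      have hv : v i = false := by
        cases hvv : v i
        · rfl
        · exact absurd (hu.trans hvv.symm) hne
      have : A = insert i B := by
        ext j
        simp only [hA, hB, Finset.mem_filter, Finset.mem_univ, true_and, Finset.mem_insert]
        by_cases hj : j = i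
        · subst hj; simp [hu, hv]
        · rw [heq j hj]; simp [hj]
      rw [this, Finset.card_insert_of_notMem (by simp [hB, hv])]
    · right
      have hv : v i = true := by
        cases hvv : v i
        · exact absurd (hu.trans hvv.symm) hne
        · rfl
      have : B = insert i A := by
        ext j
        simp only [hA, hB, Finset.mem_filter, Finset.mem_univ, true_and, Finset.mem_insert]
        by_cases hj : j = i
        · subst hj; simp [hu, hv]
        · rw [heq j hj]; simp [hj]
      rw [this, Finset.card_insert_of_notMem (by simp [hA, hu])]
  unfold isEven
  rcases key with hk | hk <;> rw [hk] <;> simp [hA, hB, Nat.even_add_one]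

lemma core_lemma (d : ℕ) (f : V d → Fin 4) (hf : IsColoring d 4 f)
    (c1 c2 : Fin 4) (hcc : c1 ≠ c2)
    (P : V d → Prop) (hP : ∀ u v : V d, (cube d).Adj u v → ¬ (P u ∧ P v))
    (Z : Set (V d)) (hZP : ∀ z ∈ Z, P z) (hTL : TwoLinked d Z)
    (hZc : ∀ z ∈ Z, f z = c1 ∨ f z = c2)
    (hNc : ∀ v ∈ nbhd d Z, f v = c1 ∨ f v = c2) :
    (∀ z ∈ Z, ∀ z' ∈ Z, f z = f z') ∧
    (∀ v ∈ nbhd d Z, ∀ v' ∈ nbhd d Z, f v = f v') ∧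
    (∀ z ∈ Z, ∀ v ∈ nbhd d Z, f z ≠ f v) := by
  -- single step
  have step : ∀ a b : V d, a ∈ Z → b ∈ Z → (cube d).dist a b ≤ 2 → f a = f b := by
    intro a b ha hb hd
    have hr : (cube d).Reachable a b := cube_reachable d a b
    have h012 : (cube d).dist a b = 0 ∨ (cube d).dist a b = 1 ∨ (cube d).dist a b = 2 := by
      omega
    rcases h012 with h0 | h1 | h2
    · have : a = b := (hr.dist_eq_zero_iff).mp h0
      rw [this]
    · have hadj : (cube d).Adj a b := SimpleGraph.dist_eq_one_iff_adj.mp h1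
      exact absurd ⟨hZP a ha, hZP b hb⟩ (hP a b hadj)
    · obtain ⟨p, hp⟩ := SimpleGraph.exists_walk_of_dist_ne_zero (by omega :
        (cube d).dist a b ≠ 0)
      rw [h2] at hp
      set w := p.getVert 1 with hw
      have hadj1 : (cube d).Adj a w := by
        have := p.adj_getVert_succ (by omega : 0 < p.length)
        rwa [p.getVert_zero] at this
      have hadj2 : (cube d).Adj w b := by
        have := p.adj_getVert_succ (by omega : 1 < p.length)
        have h2' : p.getVert (1 + 1) = b := by
          have : (1 : ℕ) + 1 = p.length := by omega
          rw [this, p.getVert_length]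
        rwa [h2'] at this
      have hwN : w ∈ nbhd d Z := ⟨a, ha, hadj1.symm⟩
      have hwc := hNc w hwN
      have h1' : f a ≠ f w := hf a w hadj1
      have h2'' : f w ≠ f b := hf w b hadj2
      rcases hZc a ha with ha' | ha' <;> rcases hZc b hb with hb' | hb' <;>
        rcases hwc with hw' | hw' <;> simp_all
  -- constant on Z
  have constZ : ∀ z ∈ Z, ∀ z' ∈ Z, f z = f z' := by
    intro z hz z' hz'
    have h := hTL z hz z' hz'
    induction h with
    | refl => rfl
    | tail h1 h2 ih =>
      exact (ih h2.1).trans (step _ _ h2.1 h2.2.1 h2.2.2)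
  refine ⟨constZ, ?_, ?_⟩
  · intro v hv v' hv'
    obtain ⟨z, hz, hadj⟩ := hv
    obtain ⟨z', hz', hadj'⟩ := hv'
    have hzz : f z = f z' := constZ z hz z' hz'
    have h1 : f v ≠ f z := hf v z hadj
    have h2 : f v' ≠ f z' := hf v' z' hadj'
    rcases hNc v ⟨z, hz, hadj⟩ with hv1 | hv1 <;>
      rcases hNc v' ⟨z', hz', hadj'⟩ with hv2 | hv2 <;>
      rcases hZc z hz with hz1 | hz1 <;> simp_all
  · intro z hz v hv
    obtain ⟨z', hz', hadj⟩ := hv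
    have h1 : f v ≠ f z' := hf v z' hadj
    rw [constZ z hz z' hz']
    exact fun h => h1 h.symm

/-- If `Z` is a 2-linked subset of `O` all of whose vertices are bad for the phase
`({1,2},{3,4})` (i.e. colored from `{1,2}`, here `{0,1} : Finset (Fin 4)`), and all
vertices of `N(Z)` are good (also colored from `{1,2}`), then `f` is constant on `Z`,
constant on `N(Z)`, and takes different values on `Z` and `N(Z)` (so `N(Z)` gets the
other element of `{1,2}`).  Analogously with `Z ⊆ E`, colors `{3,4}` (here `{2,3}`). -/
theorem monochromatic_2linked (d : ℕ) (f : V d → Fin 4) (hf : IsColoring d 4 f) :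
    (∀ Z : Set (V d), Z ⊆ {v | ¬ isEven v} → TwoLinked d Z →
      (∀ z ∈ Z, f z ∈ ({0, 1} : Finset (Fin 4))) →
      (∀ v ∈ nbhd d Z, f v ∈ ({0, 1} : Finset (Fin 4))) →
      (∀ z ∈ Z, ∀ z' ∈ Z, f z = f z') ∧
      (∀ v ∈ nbhd d Z, ∀ v' ∈ nbhd d Z, f v = f v') ∧
      (∀ z ∈ Z, ∀ v ∈ nbhd d Z, f z ≠ f v))
    ∧ (∀ Z : Set (V d), Z ⊆ {v | isEven v} → TwoLinked d Z →
      (∀ z ∈ Z, f z ∈ ({2, 3} : Finset (Fin 4))) →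
      (∀ v ∈ nbhd d Z, f v ∈ ({2, 3} : Finset (Fin 4))) →
      (∀ z ∈ Z, ∀ z' ∈ Z, f z = f z') ∧
      (∀ v ∈ nbhd d Z, ∀ v' ∈ nbhd d Z, f v = f v') ∧
      (∀ z ∈ Z, ∀ v ∈ nbhd d Z, f z ≠ f v)) := by
  constructor
  · intro Z hZO hTL hZc hNc
    refine core_lemma d f hf 0 1 (by decide) (fun v => ¬ isEven v) ?_ Z hZO hTL ?_ ?_
    · intro u v hadj ⟨hu, hv⟩
      exact hu ((cube_adj_parity hadj).mpr hv)
    · intro z hz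
      have := hZc z hz
      simpa [Finset.mem_insert, Finset.mem_singleton] using this
    · intro v hv
      have := hNc v hv
      simpa [Finset.mem_insert, Finset.mem_singleton] using this
  · intro Z hZE hTL hZc hNc
    refine core_lemma d f hf 2 3 (by decide) isEven ?_ Z hZE hTL ?_ ?_
    · intro u v hadj ⟨hu, hv⟩
      exact ((cube_adj_parity hadj).mp hu) hv
    · intro z hz
      have := hZc z hz
      simpa [Finset.mem_insert, Finset.mem_singleton] using this
    · intro v hv
      have := hNc v hv
      simpa [Finset.mem_insert, Finset.mem_singleton] using this
end
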